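/- arXiv:1106.1638 — 8 statements merged into one kernel-verified Lean document; each statement's English description precedes it below -/
import Mathlib

section
/- Let (Ω, 𝒜, Q) be a probability space, let k ≥ 2, and let Z₁, …, Z_k be random variables on Ω taking values in [0,1] almost surely, such that for each i the support of the law of Z_i is the whole interval [0,1] (regularity), and such that for all i ≠ j, Q(Z_i ≠ Z_j) > 0. Let w₁, …, w_k be strictly positive weights summing to 1. Then Var(Σ_{i=1}^k w_i Z_i) < max_{1≤i≤k} Var(Z_i). -/
open MeasureTheory ProbabilityTheory

/-- The (topological) support of a Borel measure on `ℝ`: the set of points all of whose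
open neighbourhoods have positive measure. -/
def msupport (μ : Measure ℝ) : Set ℝ :=
  {x | ∀ U : Set ℝ, IsOpen U → x ∈ U → 0 < μ U}

lemma key_ineq {k : ℕ} (w y : Fin k → ℝ) (hw : ∀ i, 0 ≤ w i) (hw1 : ∑ i, w i = 1)
    (a b : Fin k) (hab : a ≠ b) :
    (∑ i, w i * y i)^2 + w a * w b * (y a - y b)^2 ≤ ∑ i, w i * y i ^ 2 := by
  have hid : ∑ i, ∑ j, w i * w j * (y i - y j)^2
      = 2 * (∑ i, w i * y i ^ 2) - 2 * (∑ i, w i * y i)^2 := by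
    have h1 : ∀ i j : Fin k, w i * w j * (y i - y j)^2
        = (w i * y i ^ 2) * w j + (w j * y j ^ 2) * w i - (2 * (w i * y i)) * (w j * y j) := by
      intro i j; ring
    simp_rw [h1, Finset.sum_sub_distrib, Finset.sum_add_distrib, ← Finset.mul_sum,
      ← Finset.sum_mul, hw1]
    have e1 : ∑ x, (∑ x, w x * y x ^ 2) * w x = ∑ x, w x * y x ^ 2 := by
      rw [← Finset.mul_sum, hw1, mul_one]
    have e2 : ∑ i, (2:ℝ) * (w i * y i) = 2 * ∑ i, w i * y i := by
      rw [← Finset.mul_sum]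
    simp only [e1, e2]; ring
  have hne : ((a,b) : Fin k × Fin k) ≠ (b,a) := by
    exact fun h => hab (congrArg Prod.fst h)
  have hlow : w a * w b * (y a - y b)^2 + w b * w a * (y b - y a)^2
      ≤ ∑ i, ∑ j, w i * w j * (y i - y j)^2 := by
    rw [← Finset.sum_product']
    calc w a * w b * (y a - y b)^2 + w b * w a * (y b - y a)^2
        = ∑ p ∈ ({(a,b),(b,a)} : Finset (Fin k × Fin k)), w p.1 * w p.2 * (y p.1 - y p.2)^2 := by
          rw [Finset.sum_pair hne]
      _ ≤ _ := Finset.sum_le_sum_of_subset_of_nonneg (by simp)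
          (fun p _ _ => mul_nonneg (mul_nonneg (hw _) (hw _)) (sq_nonneg _))
  nlinarith [hlow, hid]

/-- If the components are regular (their PITs have law supported on all of
`[0,1]`) and pairwise distinct with positive probability, then the PIT of the linear pool
has variance strictly smaller than the maximum of the component variances
(Theorem 3(b) of Gneiting–Ranjan). -/
theorem linear_pool_variance_lt_max
    {Ω : Type*} [MeasurableSpace Ω] (Q : Measure Ω) [IsProbabilityMeasure Q]
    (k : ℕ) (hk : 2 ≤ k) (Z : Fin k → Ω → ℝ)
    (hZmeas : ∀ i, Measurable (Z i))
    (hZrange : ∀ i, ∀ᵐ ω ∂Q, Z i ω ∈ Set.Icc (0 : ℝ) 1)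
    (hZreg : ∀ i, msupport (Q.map (Z i)) = Set.Icc (0 : ℝ) 1)
    (hZne : ∀ i j, i ≠ j → 0 < Q {ω | Z i ω ≠ Z j ω})
    (w : Fin k → ℝ) (hw : ∀ i, 0 < w i) (hw1 : ∑ i, w i = 1) :
    variance (fun ω => ∑ i, w i * Z i ω) Q < ⨆ i, variance (Z i) Q := by
  have hk0 : 0 < k := by omega
  haveI : NeZero k := ⟨by omega⟩
  -- basic integrability
  have hmem2 : ∀ i, MemLp (Z i) 2 Q := fun i =>
    MemLp.of_bound (hZmeas i).aestronglyMeasurable 1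
      (by filter_upwards [hZrange i] with ω hω
          rw [Real.norm_eq_abs, abs_le]; constructor <;> linarith [hω.1, hω.2])
  have hint : ∀ i, Integrable (Z i) Q := fun i => (hmem2 i).integrable one_le_two
  set m : Fin k → ℝ := fun i => ∫ ω, Z i ω ∂Q with hm
  set Y : Fin k → Ω → ℝ := fun i ω => Z i ω - m i with hYdef
  have hYmem2 : ∀ i, MemLp (Y i) 2 Q := fun i => (hmem2 i).sub (memLp_const (m i))
  have hYsq : ∀ i, Integrable (fun ω => Y i ω ^ 2) Q := fun i => (hYmem2 i).integrable_sq
  have hvar : ∀ i, variance (Z i) Q = ∫ ω, Y i ω ^ 2 ∂Q := by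
    intro i
    rw [variance_eq_integral (hZmeas i).aemeasurable]
  -- the pool
  have hPmem2 : MemLp (fun ω => ∑ i, w i * Z i ω) 2 Q := by
    refine MemLp.of_bound ?_ 1 ?_
    · exact (Finset.measurable_sum Finset.univ fun i _ =>
        (measurable_const.mul (hZmeas i))).aestronglyMeasurable
    · have := ae_all_iff.2 hZrange
      filter_upwards [this] with ω hω
      rw [Real.norm_eq_abs, abs_le]
      constructor
      · have : (0:ℝ) ≤ ∑ i, w i * Z i ω :=
          Finset.sum_nonneg fun i _ => mul_nonneg (hw i).le (hω i).1
        linarith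
      · calc ∑ i, w i * Z i ω ≤ ∑ i, w i * 1 :=
              Finset.sum_le_sum fun i _ =>
                mul_le_mul_of_nonneg_left (hω i).2 (hw i).le
          _ = 1 := by simp [hw1]
  have hPmean : ∫ ω, ∑ i, w i * Z i ω ∂Q = ∑ i, w i * m i := by
    rw [integral_finset_sum _ fun i _ => (hint i).const_mul (w i)]
    exact Finset.sum_congr rfl fun i _ => integral_const_mul _ _
  have hPvar : variance (fun ω => ∑ i, w i * Z i ω) Q
      = ∫ ω, (∑ i, w i * Y i ω) ^ 2 ∂Q := by
    have heq : (fun ω => ∑ i, w i * Z i ω) - (fun _ => ∑ i, w i * m i)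
        = fun ω => ∑ i, w i * Y i ω := by
      funext ω
      simp only [Pi.sub_apply, hYdef]
      rw [← Finset.sum_sub_distrib]
      exact Finset.sum_congr rfl fun i _ => by ring
    rw [variance_eq_integral hPmem2.1.aemeasurable, hPmean]
    congr 1; funext ω; rw [← congrFun heq ω]; rfl
  -- case split
  by_cases hcase : ∀ i j, Q {ω | Y i ω ≠ Y j ω} = 0
  · -- degenerate case: derive contradiction
    exfalso
    set a : Fin k := ⟨0, by omega⟩
    set b : Fin k := ⟨1, by omega⟩
    have hab : a ≠ b := by simp [a, b, Fin.ext_iff]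
    have hae : ∀ᵐ ω ∂Q, Y a ω = Y b ω := by
      rw [ae_iff]; exact hcase a b
    set c : ℝ := m b - m a with hc
    have haeZ : ∀ᵐ ω ∂Q, Z b ω = Z a ω + c := by
      filter_upwards [hae] with ω hω
      simp only [hYdef] at hω
      simp only [hc]; linarith
    rcases eq_or_ne c 0 with h0 | h0
    · have : Q {ω | Z a ω ≠ Z b ω} = 0 := by
        rw [← ae_iff.symm] at haeZ
        rw [measure_eq_zero_iff_ae_notMem]
        filter_upwards [haeZ] with ω hω
        simp only [Set.mem_setOf_eq, not_not]
        rw [hω, h0, add_zero]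
      exact absurd this (hZne a b hab).ne'
    rcases h0.lt_or_gt with hneg | hpos
    · -- c < 0 : 1 not in support of Z b
      have h1 : (1:ℝ) ∈ msupport (Q.map (Z b)) := by
        rw [hZreg b]; exact ⟨zero_le_one, le_refl 1⟩
      have := h1 (Set.Ioi (1 + c)) isOpen_Ioi (by simpa using hneg)
      rw [Measure.map_apply (hZmeas b) measurableSet_Ioi] at this
      have hzero : Q (Z b ⁻¹' Set.Ioi (1 + c)) = 0 := by
        rw [measure_eq_zero_iff_ae_notMem]
        filter_upwards [haeZ, hZrange a] with ω hω hr
        simp only [Set.mem_preimage, Set.mem_Ioi, not_lt, hω]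
        linarith [hr.2]
      rw [hzero] at this; exact lt_irrefl 0 this
    · -- c > 0 : 0 not in support of Z b
      have h1 : (0:ℝ) ∈ msupport (Q.map (Z b)) := by
        rw [hZreg b]; exact ⟨le_refl 0, zero_le_one⟩
      have := h1 (Set.Iio c) isOpen_Iio hpos
      rw [Measure.map_apply (hZmeas b) measurableSet_Iio] at this
      have hzero : Q (Z b ⁻¹' Set.Iio c) = 0 := by
        rw [measure_eq_zero_iff_ae_notMem]
        filter_upwards [haeZ, hZrange a] with ω hω hr
        simp only [Set.mem_preimage, Set.mem_Iio, not_lt, hω]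
        linarith [hr.1]
      rw [hzero] at this; exact lt_irrefl 0 this
  · push_neg at hcase
    obtain ⟨a, b, hab0⟩ := hcase
    have hab : a ≠ b := by
      rintro rfl
      exact hab0 (by simp)
    have habpos : 0 < Q {ω | Y a ω ≠ Y b ω} :=
      lt_of_le_of_ne (zero_le) (Ne.symm hab0)
    -- strict inequality
    have hD : Integrable (fun ω => (Y a ω - Y b ω) ^ 2) Q :=
      ((hYmem2 a).sub (hYmem2 b)).integrable_sq
    have hDpos : 0 < ∫ ω, (Y a ω - Y b ω) ^ 2 ∂Q := by
      rw [integral_pos_iff_support_of_nonneg (fun ω => sq_nonneg _) hD]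
      have : Function.support (fun ω => (Y a ω - Y b ω) ^ 2) = {ω | Y a ω ≠ Y b ω} := by
        ext ω
        simp only [Function.mem_support, Set.mem_setOf_eq, ne_eq]
        constructor
        · intro h heq
          exact h (by rw [heq, sub_self]; norm_num)
        · intro h
          exact pow_ne_zero 2 (sub_ne_zero.mpr h)
      rw [this]; exact habpos
    have hptw : ∀ ω, (∑ i, w i * Y i ω) ^ 2
        ≤ ∑ i, w i * Y i ω ^ 2 - w a * w b * (Y a ω - Y b ω) ^ 2 := by
      intro ω
      have := key_ineq w (fun i => Y i ω) (fun i => (hw i).le) hw1 a b hab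
      linarith
    have hRHSint : Integrable
        (fun ω => ∑ i, w i * Y i ω ^ 2 - w a * w b * (Y a ω - Y b ω) ^ 2) Q :=
      (integrable_finset_sum _ fun i _ => (hYsq i).const_mul (w i)).sub
        (hD.const_mul _)
    have hLHSint : Integrable (fun ω => (∑ i, w i * Y i ω) ^ 2) Q := by
      have h := memLp_finsetSum' (μ := Q) Finset.univ
        (fun i (_ : i ∈ Finset.univ) => (hYmem2 i).const_mul (w i))
      have h2 : MemLp (fun ω => ∑ i, w i * Y i ω) 2 Q := by
        convert h using 1
        funext ω
        simp [Finset.sum_apply]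
      exact h2.integrable_sq
    have step1 : variance (fun ω => ∑ i, w i * Z i ω) Q
        ≤ ∑ i, w i * variance (Z i) Q - w a * w b * ∫ ω, (Y a ω - Y b ω) ^ 2 ∂Q := by
      rw [hPvar]
      calc ∫ ω, (∑ i, w i * Y i ω) ^ 2 ∂Q
          ≤ ∫ ω, (∑ i, w i * Y i ω ^ 2 - w a * w b * (Y a ω - Y b ω) ^ 2) ∂Q :=
            integral_mono hLHSint hRHSint hptw
        _ = ∑ i, w i * variance (Z i) Q - w a * w b * ∫ ω, (Y a ω - Y b ω) ^ 2 ∂Q := by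
            rw [integral_sub (integrable_finset_sum _ fun i _ => (hYsq i).const_mul (w i))
              (hD.const_mul _), integral_finset_sum _ fun i _ => (hYsq i).const_mul (w i),
              integral_const_mul]
            congr 1
            exact Finset.sum_congr rfl fun i _ => by
              rw [integral_const_mul, hvar]
    have hsup_mem : ∀ i, variance (Z i) Q ≤ ⨆ j, variance (Z j) Q := fun i =>
      le_ciSup (f := fun j => variance (Z j) Q)
        (Set.Finite.bddAbove (Set.finite_range _)) i
    have step2 : ∑ i, w i * variance (Z i) Q ≤ ⨆ j, variance (Z j) Q := by
      calc ∑ i, w i * variance (Z i) Q ≤ ∑ i, w i * ⨆ j, variance (Z j) Q :=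
            Finset.sum_le_sum fun i _ =>
              mul_le_mul_of_nonneg_left (hsup_mem i) (hw i).le
        _ = ⨆ j, variance (Z j) Q := by
            rw [← Finset.sum_mul, hw1, one_mul]
    have hposterm : 0 < w a * w b * ∫ ω, (Y a ω - Y b ω) ^ 2 ∂Q :=
      mul_pos (mul_pos (hw a) (hw b)) hDpos
    linarith
end

section
/- Let (Ω, 𝒜, Q) be a probability space, let k ≥ 2, and let Z₁, …, Z_k be random variables on Ω taking values in [0,1] almost surely, such that for each i, Var(Z_i) = 1/12 and the support of the law of Z_i is the whole interval [0,1], and such that for all i ≠ j, Q(Z_i ≠ Z_j) > 0. Let w₁, …, w_k be strictly positive weights summing to 1. Then Var(Σ_{i=1}^k w_i Z_i) < 1/12. -/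
open MeasureTheory ProbabilityTheory

/-- If the components are neutrally dispersed (PIT variance `1/12`)
and regular, and pairwise distinct with positive probability, then the linear pool is
overdispersed: the variance of its PIT is strictly less than `1/12`
(Theorem 3(c) of Gneiting–Ranjan). -/
theorem linear_pool_overdispersed
    {Ω : Type*} [MeasurableSpace Ω] (Q : Measure Ω) [IsProbabilityMeasure Q]
    (k : ℕ) (hk : 2 ≤ k) (Z : Fin k → Ω → ℝ)
    (hZmeas : ∀ i, Measurable (Z i))
    (hZrange : ∀ i, ∀ᵐ ω ∂Q, Z i ω ∈ Set.Icc (0 : ℝ) 1)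
    (hZvar : ∀ i, variance (Z i) Q = 1 / 12)
    (hZreg : ∀ i, msupport (Q.map (Z i)) = Set.Icc (0 : ℝ) 1)
    (hZne : ∀ i j, i ≠ j → 0 < Q {ω | Z i ω ≠ Z j ω})
    (w : Fin k → ℝ) (hw : ∀ i, 0 < w i) (hw1 : ∑ i, w i = 1) :
    variance (fun ω => ∑ i, w i * Z i ω) Q < 1 / 12 := by
  classical
  set μ : Fin k → ℝ := fun i => ∫ ω, Z i ω ∂Q with hμdef
  set Y : Fin k → Ω → ℝ := fun i ω => Z i ω - μ i with hYdef
  -- boundedness facts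
  have hZbd : ∀ i, ∀ᵐ ω ∂Q, ‖Z i ω‖ ≤ 1 := by
    intro i
    filter_upwards [hZrange i] with ω hω
    rw [Real.norm_eq_abs, abs_le]
    exact ⟨by linarith [hω.1], hω.2⟩
  have hZint : ∀ i, Integrable (Z i) Q := fun i =>
    (memLp_one_iff_integrable.mp (MemLp.of_bound (hZmeas i).aestronglyMeasurable 1 (hZbd i)))
  have hμmem : ∀ i, μ i ∈ Set.Icc (0 : ℝ) 1 := by
    intro i
    constructor
    · apply integral_nonneg_of_ae
      filter_upwards [hZrange i] with ω hω using hω.1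
    · calc ∫ ω, Z i ω ∂Q ≤ ∫ _, (1 : ℝ) ∂Q := by
            apply integral_mono_ae (hZint i) (integrable_const 1)
            filter_upwards [hZrange i] with ω hω using hω.2
        _ = 1 := by simp
  have hYmeas : ∀ i, Measurable (Y i) := fun i => (hZmeas i).sub measurable_const
  have hYbd : ∀ i, ∀ᵐ ω ∂Q, ‖Y i ω‖ ≤ 1 := by
    intro i
    filter_upwards [hZrange i] with ω hω
    rw [Real.norm_eq_abs, abs_le]
    constructor
    · have := (hμmem i).2; simp only [hYdef]; linarith [hω.1]
    · have := (hμmem i).1; simp only [hYdef]; linarith [hω.2]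
  have hYYint : ∀ i j, Integrable (fun ω => Y i ω * Y j ω) Q := by
    intro i j
    apply Integrable.mono' (integrable_const (1 : ℝ))
      ((hYmeas i).mul (hYmeas j)).aestronglyMeasurable
    filter_upwards [hYbd i, hYbd j] with ω h1 h2
    rw [Pi.mul_apply, norm_mul]
    calc ‖Y i ω‖ * ‖Y j ω‖ ≤ 1 * 1 := by
          apply mul_le_mul h1 h2 (norm_nonneg _) zero_le_one
      _ = 1 := by ring
  -- variance of each component as an integral of the centered square
  have hYsq : ∀ i, ∫ ω, Y i ω ^ 2 ∂Q = 1 / 12 := by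
    intro i
    have hmem : MemLp (Z i) 2 Q := MemLp.of_bound (hZmeas i).aestronglyMeasurable 1 (hZbd i)
    rw [← hZvar i, variance_eq_integral hmem.aemeasurable]
  -- covariance terms
  set C : Fin k → Fin k → ℝ := fun i j => ∫ ω, Y i ω * Y j ω ∂Q with hCdef
  have hCov : ∀ i j, ∫ ω, (Y i ω - Y j ω) ^ 2 ∂Q = 1 / 6 - 2 * C i j := by
    intro i j
    have : (fun ω => (Y i ω - Y j ω) ^ 2) =
        fun ω => Y i ω ^ 2 + Y j ω ^ 2 - 2 * (Y i ω * Y j ω) := by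
      funext ω; ring
    have hii : Integrable (fun ω => Y i ω ^ 2) Q :=
      (hYYint i i).congr (Filter.Eventually.of_forall fun ω => by ring)
    have hjj : Integrable (fun ω => Y j ω ^ 2) Q :=
      (hYYint j j).congr (Filter.Eventually.of_forall fun ω => by ring)
    have hsum : Integrable (fun ω => Y i ω ^ 2 + Y j ω ^ 2) Q := hii.add hjj
    rw [this, integral_sub hsum ((hYYint i j).const_mul 2),
      integral_add hii hjj, integral_const_mul, hYsq i, hYsq j, hCdef]
    ring
  have hCle : ∀ i j, C i j ≤ 1 / 12 := by
    intro i j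
    have h0 : 0 ≤ ∫ ω, (Y i ω - Y j ω) ^ 2 ∂Q :=
      integral_nonneg (fun ω => sq_nonneg _)
    rw [hCov i j] at h0
    linarith
  -- the strict inequality for a distinguished pair
  obtain ⟨i0, i1, hne01⟩ : ∃ i0 i1 : Fin k, i0 ≠ i1 :=
    ⟨⟨0, by omega⟩, ⟨1, by omega⟩, by simp [Fin.ext_iff]⟩
  -- key: if Y i = Y j a.e. we get a contradiction
  have hkey : ∀ i j : Fin k, i ≠ j → ¬ (∀ᵐ ω ∂Q, Y i ω = Y j ω) := by
    intro i j hij hae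
    set c : ℝ := μ i - μ j with hc
    have hZc : ∀ᵐ ω ∂Q, Z i ω - Z j ω = c := by
      filter_upwards [hae] with ω hω
      simp only [hYdef] at hω
      rw [hc]; linarith
    rcases lt_trichotomy c 0 with hclt | hc0 | hcgt
    · -- c < 0 : Z i ≤ 1 + c < 1 a.e., contradicting support of Z i
      have hZle : ∀ᵐ ω ∂Q, Z i ω ≤ 1 + c := by
        filter_upwards [hZc, hZrange j] with ω h1 h2
        linarith [h2.2]
      have h1mem : (1 : ℝ) ∈ msupport (Q.map (Z i)) := by
        rw [hZreg i]; exact ⟨zero_le_one, le_refl 1⟩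
      have hpos := h1mem (Set.Ioi (1 + c)) isOpen_Ioi (by simp; linarith)
      rw [Measure.map_apply (hZmeas i) measurableSet_Ioi] at hpos
      have hnull : Q (Z i ⁻¹' Set.Ioi (1 + c)) = 0 := by
        apply measure_eq_zero_iff_ae_notMem.mpr
        filter_upwards [hZle] with ω hω
        simp only [Set.mem_preimage, Set.mem_Ioi]
        linarith
      rw [hnull] at hpos; exact lt_irrefl 0 hpos
    · -- c = 0 : Z i = Z j a.e., contradicting hZne
      have : Q {ω | Z i ω ≠ Z j ω} = 0 := by
        apply measure_eq_zero_iff_ae_notMem.mpr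
        filter_upwards [hZc] with ω hω
        simp only [Set.mem_setOf_eq, not_not]
        rw [hc0] at hω; linarith
      exact absurd this (hZne i j hij).ne'
    · -- c > 0 : Z j ≤ 1 - c < 1 a.e., contradicting support of Z j
      have hZle : ∀ᵐ ω ∂Q, Z j ω ≤ 1 - c := by
        filter_upwards [hZc, hZrange i] with ω h1 h2
        linarith [h2.2]
      have h1mem : (1 : ℝ) ∈ msupport (Q.map (Z j)) := by
        rw [hZreg j]; exact ⟨zero_le_one, le_refl 1⟩
      have hpos := h1mem (Set.Ioi (1 - c)) isOpen_Ioi (by simp; linarith)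
      rw [Measure.map_apply (hZmeas j) measurableSet_Ioi] at hpos
      have hnull : Q (Z j ⁻¹' Set.Ioi (1 - c)) = 0 := by
        apply measure_eq_zero_iff_ae_notMem.mpr
        filter_upwards [hZle] with ω hω
        simp only [Set.mem_preimage, Set.mem_Ioi]
        linarith
      rw [hnull] at hpos; exact lt_irrefl 0 hpos
  have hClt : C i0 i1 < 1 / 12 := by
    rcases lt_or_eq_of_le (hCle i0 i1) with h | h
    · exact h
    · exfalso
      have hD : ∫ ω, (Y i0 ω - Y i1 ω) ^ 2 ∂Q = 0 := by
        rw [hCov i0 i1, h]; norm_num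
      have hint : Integrable (fun ω => (Y i0 ω - Y i1 ω) ^ 2) Q := by
        have : (fun ω => (Y i0 ω - Y i1 ω) ^ 2) =
            fun ω => Y i0 ω * Y i0 ω + Y i1 ω * Y i1 ω - 2 * (Y i0 ω * Y i1 ω) := by
          funext ω; ring
        rw [this]
        exact ((hYYint i0 i0).add (hYYint i1 i1)).sub ((hYYint i0 i1).const_mul 2)
      have := (integral_eq_zero_iff_of_nonneg (fun ω => sq_nonneg _) hint).mp hD
      apply hkey i0 i1 hne01
      filter_upwards [this] with ω hω
      have : (Y i0 ω - Y i1 ω) ^ 2 = 0 := hω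
      have := pow_eq_zero_iff (n := 2) (by norm_num) |>.mp this
      linarith
  -- the pooled variable and its variance
  set S : Ω → ℝ := fun ω => ∑ i, w i * Z i ω with hSdef
  have hSmeas : Measurable S := by
    apply Finset.measurable_sum
    intro i _
    exact (hZmeas i).const_mul (w i)
  have hSbd : ∀ᵐ ω ∂Q, ‖S ω‖ ≤ 1 := by
    have : ∀ᵐ ω ∂Q, ∀ i, Z i ω ∈ Set.Icc (0 : ℝ) 1 := ae_all_iff.mpr hZrange
    filter_upwards [this] with ω hω
    rw [Real.norm_eq_abs, abs_le]
    constructor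
    · have : (0 : ℝ) ≤ S ω := Finset.sum_nonneg fun i _ =>
        mul_nonneg (hw i).le (hω i).1
      linarith
    · calc S ω ≤ ∑ i, w i * 1 := Finset.sum_le_sum fun i _ =>
            mul_le_mul_of_nonneg_left (hω i).2 (hw i).le
        _ = 1 := by simp [hw1]
  have hSmem : MemLp S 2 Q := MemLp.of_bound hSmeas.aestronglyMeasurable 1 hSbd
  have hSmean : ∫ ω, S ω ∂Q = ∑ i, w i * μ i := by
    rw [hSdef]
    rw [integral_finset_sum _ (fun i _ => (hZint i).const_mul (w i))]
    congr 1
    funext i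
    exact integral_const_mul _ _
  have hSvar : variance S Q = ∫ ω, (∑ i, w i * Y i ω) ^ 2 ∂Q := by
    rw [variance_eq_integral hSmem.aemeasurable]
    congr 1
    funext ω
    rw [hSmean]
    simp only [Pi.pow_apply, Pi.sub_apply, hSmean, hSdef, hYdef]
    congr 1
    rw [← Finset.sum_sub_distrib]
    congr 1
    funext i
    ring
  -- expand the square of the sum
  have hexpand : variance S Q = ∑ i, ∑ j, w i * w j * C i j := by
    rw [hSvar]
    have h1 : ∀ ω, (∑ i, w i * Y i ω) ^ 2 =
        ∑ i, ∑ j, w i * w j * (Y i ω * Y j ω) := by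
      intro ω
      rw [sq, Finset.sum_mul_sum]
      congr 1; funext i; congr 1; funext j; ring
    simp_rw [h1]
    rw [integral_finset_sum _ (fun i _ => by
      apply integrable_finset_sum
      intro j _
      exact (hYYint i j).const_mul (w i * w j))]
    congr 1
    funext i
    rw [integral_finset_sum _ (fun j _ => (hYYint i j).const_mul (w i * w j))]
    congr 1
    funext j
    exact integral_const_mul _ _
  -- final estimate
  rw [hexpand]
  have hfinal : ∑ i, ∑ j, w i * w j * C i j < ∑ i, ∑ j, w i * w j * (1 / 12) := by
    apply Finset.sum_lt_sum
    · intro i _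
      apply Finset.sum_le_sum
      intro j _
      exact mul_le_mul_of_nonneg_left (hCle i j) (mul_pos (hw i) (hw j)).le
    · refine ⟨i0, Finset.mem_univ i0, ?_⟩
      apply Finset.sum_lt_sum
      · intro j _
        exact mul_le_mul_of_nonneg_left (hCle i0 j) (mul_pos (hw i0) (hw j)).le
      · exact ⟨i1, Finset.mem_univ i1,
          mul_lt_mul_of_pos_left hClt (mul_pos (hw i0) (hw i1))⟩
  calc ∑ i, ∑ j, w i * w j * C i j < ∑ i, ∑ j, w i * w j * (1 / 12) := hfinal
    _ = 1 / 12 := by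
        simp_rw [mul_assoc, ← Finset.mul_sum, ← Finset.sum_mul, hw1]
        ring
end

section
/- Let (Ω, 𝒜, Q) be a probability space, let k ≥ 2, and let Z₁, …, Z_k be random variables on Ω each uniformly distributed on [0,1], such that for some i ≠ j, Q(Z_i ≠ Z_j) > 0. Let w₁, …, w_k be strictly positive weights summing to 1. Then the random variable Σ_{i=1}^k w_i Z_i is not uniformly distributed on [0,1]; indeed its variance is strictly less than 1/12. -/
open MeasureTheory ProbabilityTheory


lemma unif_int_id : ∫ x in Set.Icc (0:ℝ) 1, x = 1/2 := by
  rw [MeasureTheory.integral_Icc_eq_integral_Ioc,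
    ← intervalIntegral.integral_of_le (by norm_num : (0:ℝ) ≤ 1)]
  simp

lemma unif_int_sq : ∫ x in Set.Icc (0:ℝ) 1, x^2 = 1/3 := by
  rw [MeasureTheory.integral_Icc_eq_integral_Ioc,
    ← intervalIntegral.integral_of_le (by norm_num : (0:ℝ) ≤ 1)]
  simp; norm_num

/-- If `Z₁, …, Z_k` are uniformly distributed on `[0,1]` and some pair of
them differs with positive probability, then a convex combination with strictly positive
weights is not uniformly distributed on `[0,1]`; indeed its variance is strictly less
than `1/12` (core of Theorem 4 of Gneiting–Ranjan; cf. Hora 2004). -/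
theorem linear_pool_of_uniform_not_uniform
    {Ω : Type*} [MeasurableSpace Ω] (Q : Measure Ω) [IsProbabilityMeasure Q]
    (k : ℕ) (hk : 2 ≤ k) (Z : Fin k → Ω → ℝ)
    (hZmeas : ∀ i, Measurable (Z i))
    (hZunif : ∀ i, Q.map (Z i) = volume.restrict (Set.Icc (0 : ℝ) 1))
    (hZne : ∃ i j, i ≠ j ∧ 0 < Q {ω | Z i ω ≠ Z j ω})
    (w : Fin k → ℝ) (hw : ∀ i, 0 < w i) (hw1 : ∑ i, w i = 1) :
    Q.map (fun ω => ∑ i, w i * Z i ω) ≠ volume.restrict (Set.Icc (0 : ℝ) 1) ∧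
      variance (fun ω => ∑ i, w i * Z i ω) Q < 1 / 12 := by
  obtain ⟨i₀, j₀, hij, hpos⟩ := hZne
  -- a.e. bounds
  have hae : ∀ i, ∀ᵐ ω ∂Q, Z i ω ∈ Set.Icc (0:ℝ) 1 := by
    intro i
    have h0 : Q.map (Z i) (Set.Icc (0:ℝ) 1)ᶜ = 0 := by
      rw [hZunif i, Measure.restrict_apply measurableSet_Icc.compl]
      simp
    rw [Measure.map_apply (hZmeas i) measurableSet_Icc.compl] at h0
    exact (ae_iff).2 h0
  have haeall : ∀ᵐ ω ∂Q, ∀ i, Z i ω ∈ Set.Icc (0:ℝ) 1 := ae_all_iff.2 hae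
  -- integrability
  have hZint : ∀ i, Integrable (Z i) Q := fun i =>
    ⟨(hZmeas i).aestronglyMeasurable,
      HasFiniteIntegral.of_bounded ((hae i).mono fun ω h => by
        rw [Real.norm_eq_abs, abs_le]; exact ⟨by linarith [h.1], h.2⟩)⟩
  have hmul : ∀ i j, Integrable (fun ω => Z i ω * Z j ω) Q := fun i j =>
    ⟨((hZmeas i).mul (hZmeas j)).aestronglyMeasurable,
      HasFiniteIntegral.of_bounded (((hae i).and (hae j)).mono fun ω ⟨h1, h2⟩ => by
        rw [Real.norm_eq_abs, abs_mul]
        calc |Z i ω| * |Z j ω| ≤ 1 * 1 := by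
              apply mul_le_mul (abs_le.2 ⟨by linarith [h1.1], h1.2⟩)
                (abs_le.2 ⟨by linarith [h2.1], h2.2⟩) (abs_nonneg _) zero_le_one
          _ = 1 := by norm_num)⟩
  have hsq : ∀ i, Integrable (fun ω => Z i ω ^ 2) Q := fun i => by
    have := hmul i i; simpa [sq] using this
  -- moments
  have hE1 : ∀ i, ∫ ω, Z i ω ∂Q = 1/2 := by
    intro i
    have h := integral_map (μ := Q) (hZmeas i).aemeasurable
      (f := fun x : ℝ => x) aestronglyMeasurable_id
    rw [hZunif i] at h
    rw [← h]; exact unif_int_id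
  have hE2 : ∀ i, ∫ ω, Z i ω ^ 2 ∂Q = 1/3 := by
    intro i
    have h := integral_map (μ := Q) (hZmeas i).aemeasurable
      (f := fun x : ℝ => x^2) (measurable_id.pow_const 2).aestronglyMeasurable
    rw [hZunif i] at h
    rw [← h]; exact unif_int_sq
  -- cross moments
  have havg : ∀ i j, ∫ ω, (Z i ω ^ 2 + Z j ω ^ 2) / 2 ∂Q = 1/3 := by
    intro i j
    rw [integral_div, integral_add (hsq i) (hsq j), hE2 i, hE2 j]; norm_num
  have hEij_le : ∀ i j, ∫ ω, Z i ω * Z j ω ∂Q ≤ 1/3 := by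
    intro i j
    have hI : Integrable (fun ω => (Z i ω ^ 2 + Z j ω ^ 2) / 2) Q :=
      ((hsq i).add (hsq j)).div_const 2
    calc ∫ ω, Z i ω * Z j ω ∂Q ≤ ∫ ω, (Z i ω ^ 2 + Z j ω ^ 2) / 2 ∂Q := by
          apply integral_mono (hmul i j) hI
          intro ω; nlinarith [sq_nonneg (Z i ω - Z j ω)]
      _ = 1/3 := havg i j
  -- strict for the special pair
  have hdiffint : Integrable (fun ω => (Z i₀ ω - Z j₀ ω)^2) Q := by
    have h : (fun ω => (Z i₀ ω - Z j₀ ω)^2)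
        = fun ω => Z i₀ ω ^2 + Z j₀ ω ^2 - 2 * (Z i₀ ω * Z j₀ ω) := by
      funext ω; ring
    rw [h]
    exact ((hsq i₀).add (hsq j₀)).sub ((hmul i₀ j₀).const_mul 2)
  have hdiffpos : 0 < ∫ ω, (Z i₀ ω - Z j₀ ω)^2 ∂Q := by
    rw [integral_pos_iff_support_of_nonneg (fun ω => sq_nonneg _) hdiffint]
    have hs : Function.support (fun ω => (Z i₀ ω - Z j₀ ω)^2) = {ω | Z i₀ ω ≠ Z j₀ ω} := by
      ext ω
      simp [Function.mem_support, sub_eq_zero, pow_eq_zero_iff]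
    rw [hs]; exact hpos
  have hexp : ∫ ω, (Z i₀ ω - Z j₀ ω)^2 ∂Q
      = 1/3 + 1/3 - 2 * ∫ ω, Z i₀ ω * Z j₀ ω ∂Q := by
    have h : (fun ω => (Z i₀ ω - Z j₀ ω)^2)
        = fun ω => Z i₀ ω ^2 + Z j₀ ω ^2 - 2 * (Z i₀ ω * Z j₀ ω) := by
      funext ω; ring
    have hadd : Integrable (fun ω => Z i₀ ω ^ 2 + Z j₀ ω ^ 2) Q := (hsq i₀).add (hsq j₀)
    rw [h, integral_sub hadd ((hmul i₀ j₀).const_mul 2),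
      integral_add (hsq i₀) (hsq j₀), integral_const_mul, hE2 i₀, hE2 j₀]
  have hEij_lt : ∫ ω, Z i₀ ω * Z j₀ ω ∂Q < 1/3 := by linarith
  -- the pooled variable
  set X : Ω → ℝ := fun ω => ∑ i, w i * Z i ω with hX
  have hXmeas : Measurable X := by
    apply Finset.measurable_sum
    exact fun i _ => (hZmeas i).const_mul (w i)
  have hXbound : ∀ᵐ ω ∂Q, ‖X ω‖ ≤ 1 := haeall.mono fun ω h => by
    rw [Real.norm_eq_abs]
    calc |∑ i, w i * Z i ω| ≤ ∑ i, |w i * Z i ω| := Finset.abs_sum_le_sum_abs _ _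
      _ ≤ ∑ i, w i := Finset.sum_le_sum fun i _ => by
          rw [abs_mul, abs_of_pos (hw i)]
          have h1 := (h i).1; have h2 := (h i).2
          have habs : |Z i ω| ≤ 1 := abs_le.2 ⟨by linarith, h2⟩
          calc w i * |Z i ω| ≤ w i * 1 := mul_le_mul_of_nonneg_left habs (hw i).le
            _ = w i := mul_one _
      _ = 1 := hw1
  have hX2 : MemLp X 2 Q :=
    (memLp_top_of_bound hXmeas.aestronglyMeasurable 1 hXbound).mono_exponent le_top
  have hEX : ∫ ω, X ω ∂Q = 1/2 := by
    rw [hX, integral_finset_sum _ fun i _ => (hZint i).const_mul (w i)]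
    simp_rw [integral_const_mul, hE1]
    rw [← Finset.sum_mul, hw1]; norm_num
  have hXint2 : ∀ i, Integrable (fun ω => ∑ j, w i * w j * (Z i ω * Z j ω)) Q := by
    intro i
    exact integrable_finset_sum _ fun j _ => (hmul i j).const_mul _
  have hEX2 : ∫ ω, X ω ^ 2 ∂Q < 1/3 := by
    have hsq_eq : ∀ ω, X ω ^ 2 = ∑ i, ∑ j, w i * w j * (Z i ω * Z j ω) := by
      intro ω
      rw [hX, sq, Finset.sum_mul_sum]
      exact Finset.sum_congr rfl fun i _ => Finset.sum_congr rfl fun j _ => by ring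
    calc ∫ ω, X ω ^ 2 ∂Q = ∑ i, ∑ j, w i * w j * ∫ ω, Z i ω * Z j ω ∂Q := by
          simp_rw [hsq_eq]
          rw [integral_finset_sum _ fun i _ => hXint2 i]
          exact Finset.sum_congr rfl fun i _ => by
            rw [integral_finset_sum _ fun j _ => (hmul i j).const_mul _]
            exact Finset.sum_congr rfl fun j _ => integral_const_mul _ _
      _ < ∑ i, ∑ j, w i * w j * (1/3) := by
          apply Finset.sum_lt_sum
          · intro i _
            exact Finset.sum_le_sum fun j _ =>
              mul_le_mul_of_nonneg_left (hEij_le i j)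
                (mul_nonneg (hw i).le (hw j).le)
          · refine ⟨i₀, Finset.mem_univ _, ?_⟩
            apply Finset.sum_lt_sum
            · intro j _
              exact mul_le_mul_of_nonneg_left (hEij_le i₀ j)
                (mul_nonneg (hw i₀).le (hw j).le)
            · exact ⟨j₀, Finset.mem_univ _,
                mul_lt_mul_of_pos_left hEij_lt (mul_pos (hw i₀) (hw j₀))⟩
      _ = 1/3 := by
          simp_rw [mul_assoc, ← Finset.mul_sum, ← Finset.sum_mul, hw1, one_mul]
  have hvar : variance X Q < 1/12 := by
    rw [variance_eq_sub hX2]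
    simp only [Pi.pow_apply]
    rw [hEX]
    nlinarith
  refine ⟨?_, hvar⟩
  intro hmap
  have h2 : ∫ ω, X ω ^ 2 ∂Q = 1/3 := by
    have h := integral_map (μ := Q) hXmeas.aemeasurable
      (f := fun x : ℝ => x^2) (measurable_id.pow_const 2).aestronglyMeasurable
    rw [hmap] at h
    rw [← h]; exact unif_int_sq
  linarith [hEX2]
end

section
/- Let (Ω, 𝒜, Q) be a probability space, let k ≥ 2, and let X₁, …, X_k be square-integrable real random variables on Ω that all have the same distribution, with common variance σ² ∈ (0, ∞). Let w₁, …, w_k be strictly positive weights with Σ_{i=1}^k w_i ≤ 1, and suppose that the random variable S = Σ_{i=1}^k w_i X_i also has the same distribution as X₁. Then Σ_{i=1}^k w_i = 1 and X₁ = X₂ = ⋯ = X_k almost surely. -/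
open MeasureTheory ProbabilityTheory Finset

local notation "⟪" x ", " y "⟫" => @inner ℝ _ _ x y

private lemma Lp_coeFn_finset_sum {α E : Type*} [MeasurableSpace α] {μ : Measure α}
    [NormedAddCommGroup E] {p : ENNReal} {ι : Type*} (s : Finset ι) (u : ι → Lp E p μ) :
    ⇑(∑ i ∈ s, u i) =ᵐ[μ] fun a => ∑ i ∈ s, u i a := by
  classical
  induction s using Finset.induction_on with
  | empty => simp only [Finset.sum_empty]; exact Lp.coeFn_zero E p μ
  | insert i s h ih =>
      rw [Finset.sum_insert h]
      filter_upwards [Lp.coeFn_add (u i) (∑ j ∈ s, u j), ih] with a ha hb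
      rw [ha, Pi.add_apply, hb, Finset.sum_insert h]

/-- Rigidity of linear combinations of identically distributed
square-integrable random variables with common positive variance: if a combination with
strictly positive weights summing to at most one has the same distribution as the
components, then the weights sum to one and the components coincide almost surely
(the variance–covariance argument underlying Theorem 6 of Gneiting–Ranjan). -/
theorem identically_distributed_linear_combination_rigidity
    {Ω : Type*} [MeasurableSpace Ω] (Q : Measure Ω) [IsProbabilityMeasure Q]
    (k : ℕ) (hk : 2 ≤ k) (X : Fin k → Ω → ℝ)
    (hXmeas : ∀ i, Measurable (X i))
    (hXL2 : ∀ i, MemLp (X i) 2 Q)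
    (hXident : ∀ i j, Q.map (X i) = Q.map (X j))
    (σ2 : ℝ) (hσ2 : 0 < σ2) (hXvar : ∀ i, variance (X i) Q = σ2)
    (w : Fin k → ℝ) (hw : ∀ i, 0 < w i) (hw1 : ∑ i, w i ≤ 1)
    (hS : Q.map (fun ω => ∑ i, w i * X i ω) = Q.map (X ⟨0, by omega⟩)) :
    ∑ i, w i = 1 ∧ ∀ i j, X i =ᵐ[Q] X j := by
  classical
  set i0 : Fin k := ⟨0, by omega⟩ with hi0
  set μ : ℝ := ∫ ω, X i0 ω ∂Q with hμdef
  set m2 : ℝ := ∫ ω, (X i0 ω)^2 ∂Q with hm2def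
  -- means are all equal
  have hmean : ∀ i, ∫ ω, X i ω ∂Q = μ := by
    intro i
    have h1 : ∫ ω, X i ω ∂Q = ∫ x, x ∂(Q.map (X i)) :=
      (integral_map (hXmeas i).aemeasurable aestronglyMeasurable_id).symm
    have h2 : ∫ ω, X i0 ω ∂Q = ∫ x, x ∂(Q.map (X i0)) :=
      (integral_map (hXmeas i0).aemeasurable aestronglyMeasurable_id).symm
    rw [h1, hXident i i0, ← h2]
  have hsq : ∀ i, ∫ ω, (X i ω)^2 ∂Q = m2 := by
    intro i
    have h1 : ∫ ω, (X i ω)^2 ∂Q = ∫ x, x^2 ∂(Q.map (X i)) :=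
      (integral_map (hXmeas i).aemeasurable
        (measurable_id.pow_const 2).aestronglyMeasurable).symm
    have h2 : ∫ ω, (X i0 ω)^2 ∂Q = ∫ x, x^2 ∂(Q.map (X i0)) :=
      (integral_map (hXmeas i0).aemeasurable
        (measurable_id.pow_const 2).aestronglyMeasurable).symm
    rw [h1, hXident i i0, ← h2]
  have hm2 : m2 = σ2 + μ^2 := by
    have := variance_eq_sub (hXL2 i0)
    rw [hXvar i0] at this
    have hpow : (∫ ω, (X i0 ^ 2) ω ∂Q) = m2 := by
      rfl
    simp only [hpow] at this
    rw [← hμdef] at this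
    linarith [this]
  -- the combination S
  set S : Ω → ℝ := fun ω => ∑ i, w i * X i ω with hSdef
  have hSmeas : Measurable S := by
    apply Finset.measurable_sum
    exact fun i _ => (hXmeas i).const_mul (w i)
  have hSL2 : MemLp S 2 Q :=
    memLp_finset_sum Finset.univ (fun i _ => (hXL2 i).const_mul (w i))
  have hSmean : ∫ ω, S ω ∂Q = μ := by
    have h1 : ∫ ω, S ω ∂Q = ∫ x, x ∂(Q.map S) :=
      (integral_map hSmeas.aemeasurable aestronglyMeasurable_id).symm
    have h2 : ∫ ω, X i0 ω ∂Q = ∫ x, x ∂(Q.map (X i0)) :=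
      (integral_map (hXmeas i0).aemeasurable aestronglyMeasurable_id).symm
    rw [h1, hS, ← h2]
  have hSsq : ∫ ω, (S ω)^2 ∂Q = m2 := by
    have h1 : ∫ ω, (S ω)^2 ∂Q = ∫ x, x^2 ∂(Q.map S) :=
      (integral_map hSmeas.aemeasurable
        (measurable_id.pow_const 2).aestronglyMeasurable).symm
    have h2 : ∫ ω, (X i0 ω)^2 ∂Q = ∫ x, x^2 ∂(Q.map (X i0)) :=
      (integral_map (hXmeas i0).aemeasurable
        (measurable_id.pow_const 2).aestronglyMeasurable).symm
    rw [h1, hS, ← h2]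
  set s : ℝ := ∑ i, w i with hsdef
  have hkpos : (Finset.univ : Finset (Fin k)).Nonempty := by
    refine ⟨i0, Finset.mem_univ _⟩
  have hspos : 0 < s := Finset.sum_pos (fun i _ => hw i) hkpos
  -- centered variables
  set Y : Fin k → Ω → ℝ := fun i ω => X i ω - μ with hYdef
  have hYL2 : ∀ i, MemLp (Y i) 2 Q := fun i => (hXL2 i).sub (memLp_const μ)
  set g : Fin k → Lp ℝ 2 Q := fun i => (hYL2 i).toLp (Y i) with hgdef
  have hg_ae : ∀ i, ⇑(g i) =ᵐ[Q] Y i := fun i => (hYL2 i).coeFn_toLp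
  -- second moments of Y
  have hYsq : ∀ i, ∫ ω, Y i ω * Y i ω ∂Q = σ2 := by
    intro i
    have hexp : ∀ ω, Y i ω * Y i ω = (X i ω)^2 - 2*μ * X i ω + μ^2 := by
      intro ω; simp only [hYdef]; ring
    calc ∫ ω, Y i ω * Y i ω ∂Q
        = ∫ ω, ((X i ω)^2 - 2*μ * X i ω + μ^2) ∂Q := by
          exact integral_congr_ae (Filter.Eventually.of_forall hexp)
      _ = σ2 := by
          rw [integral_add, integral_sub]
          · rw [integral_const_mul, hmean i, hsq i, integral_const]
            simp only [measure_univ, ENNReal.toReal_one, probReal_univ, smul_eq_mul, one_mul]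
            rw [hm2]; ring
          · exact (hXL2 i).integrable_sq
          · exact ((hXL2 i).integrable one_le_two).const_mul _
          · exact ((hXL2 i).integrable_sq).sub
              (((hXL2 i).integrable one_le_two).const_mul _)
          · exact integrable_const _
  -- inner products
  have hgg : ∀ i, ⟪g i, g i⟫ = σ2 := by
    intro i
    rw [L2.inner_def]
    rw [← hYsq i]
    refine integral_congr_ae ?_
    filter_upwards [hg_ae i] with a ha
    simp [ha, RCLike.inner_apply, pow_two]
  have hnorm : ∀ i, ‖g i‖ = Real.sqrt σ2 := by
    intro i
    have h1 : ‖g i‖^2 = σ2 := by rw [← real_inner_self_eq_norm_sq]; exact hgg i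
    rw [← h1, Real.sqrt_sq (norm_nonneg _)]
  have hCS : ∀ i j, ⟪g i, g j⟫ ≤ σ2 := by
    intro i j
    calc ⟪g i, g j⟫ ≤ ‖g i‖ * ‖g j‖ := real_inner_le_norm _ _
      _ = σ2 := by rw [hnorm i, hnorm j, Real.mul_self_sqrt hσ2.le]
  -- the combination in L2
  set P : Lp ℝ 2 Q := ∑ i, w i • g i with hPdef
  have hP_ae : ⇑P =ᵐ[Q] fun ω => S ω - s * μ := by
    have h0 : ⇑P =ᵐ[Q] fun a => ∑ i, (w i • g i) a :=
      Lp_coeFn_finset_sum Finset.univ (fun i => w i • g i)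
    have h1 : ∀ i : Fin k, ⇑(w i • g i) =ᵐ[Q] fun a => w i * Y i a := by
      intro i
      filter_upwards [Lp.coeFn_smul (w i) (g i), hg_ae i] with a ha hb
      simp [ha, hb]
    rw [Filter.EventuallyEq] at *
    have h2 : ∀ᵐ a ∂Q, ∀ i : Fin k, (w i • g i) a = w i * Y i a :=
      MeasureTheory.ae_all_iff.mpr h1
    filter_upwards [h0, h2] with a ha hb
    rw [ha]
    simp only [hb]
    simp only [hYdef, hSdef, hsdef, mul_sub]
    rw [Finset.sum_sub_distrib, Finset.sum_mul]
  have hPP_int : ⟪P, P⟫ = σ2 + μ^2 * (1 - s)^2 := by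
    rw [L2.inner_def]
    have : ∫ a, (inner ℝ (P a) (P a) : ℝ) ∂Q = ∫ a, (S a - s*μ) * (S a - s*μ) ∂Q := by
      refine integral_congr_ae ?_
      filter_upwards [hP_ae] with a ha
      simp [ha, RCLike.inner_apply, pow_two]
    rw [this]
    have hexp : ∀ a, (S a - s*μ) * (S a - s*μ) = (S a)^2 - (2*(s*μ)) * S a + (s*μ)^2 := by
      intro a; ring
    rw [integral_congr_ae (Filter.Eventually.of_forall hexp)]
    rw [integral_add, integral_sub]
    · rw [integral_const_mul, hSmean, hSsq, integral_const]
      simp only [measure_univ, ENNReal.toReal_one, probReal_univ, smul_eq_mul, one_mul]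
      rw [hm2]; ring
    · exact hSL2.integrable_sq
    · exact (hSL2.integrable one_le_two).const_mul _
    · exact (hSL2.integrable_sq).sub ((hSL2.integrable one_le_two).const_mul _)
    · exact integrable_const _
  have hPP_alg : ⟪P, P⟫ = ∑ i, ∑ j, w i * w j * ⟪g i, g j⟫ := by
    rw [hPdef, sum_inner]
    refine Finset.sum_congr rfl (fun i _ => ?_)
    rw [inner_sum]
    refine Finset.sum_congr rfl (fun j _ => ?_)
    rw [real_inner_smul_left, real_inner_smul_right]
    ring
  have hub : ⟪P, P⟫ ≤ s^2 * σ2 := by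
    rw [hPP_alg]
    calc ∑ i, ∑ j, w i * w j * ⟪g i, g j⟫
        ≤ ∑ i, ∑ j, w i * w j * σ2 := by
          refine Finset.sum_le_sum (fun i _ => Finset.sum_le_sum (fun j _ => ?_))
          exact mul_le_mul_of_nonneg_left (hCS i j) (mul_pos (hw i) (hw j)).le
      _ = s^2 * σ2 := by
          simp_rw [mul_assoc]
          rw [← Finset.sum_mul_sum, ← Finset.sum_mul, ← hsdef]
          ring
  -- weights sum to one
  have hsle : σ2 ≤ s^2 * σ2 := by nlinarith [hPP_int, hub, sq_nonneg (μ * (1 - s))]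
  have hs1 : s = 1 := by
    by_contra hne
    have hlt : s < 1 := lt_of_le_of_ne hw1 hne
    have h2 : s^2 < 1 := by nlinarith
    nlinarith
  refine ⟨hs1, ?_⟩
  -- all pairwise inner products equal σ2
  have hsumeq : ∑ i, ∑ j, w i * w j * ⟪g i, g j⟫ = ∑ i, ∑ j, w i * w j * σ2 := by
    have h1 : ⟪P, P⟫ = σ2 := by rw [hPP_int, hs1]; ring
    rw [← hPP_alg, h1]
    simp_rw [mul_assoc]
    rw [← Finset.sum_mul_sum, ← Finset.sum_mul, ← hsdef, hs1]
    ring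
  have hterm : ∀ i j, ⟪g i, g j⟫ = σ2 := by
    intro i j
    by_contra hne
    have hlt : w i * w j * ⟪g i, g j⟫ < w i * w j * σ2 :=
      mul_lt_mul_of_pos_left (lt_of_le_of_ne (hCS i j) hne) (mul_pos (hw i) (hw j))
    have hstrict : ∑ i, ∑ j, w i * w j * ⟪g i, g j⟫ < ∑ i, ∑ j, w i * w j * σ2 := by
      refine Finset.sum_lt_sum (fun a _ => Finset.sum_le_sum (fun b _ =>
        mul_le_mul_of_nonneg_left (hCS a b) (mul_pos (hw a) (hw b)).le))
        ⟨i, Finset.mem_univ i, ?_⟩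
      refine Finset.sum_lt_sum (fun b _ =>
        mul_le_mul_of_nonneg_left (hCS i b) (mul_pos (hw i) (hw b)).le)
        ⟨j, Finset.mem_univ j, hlt⟩
    exact absurd hsumeq (ne_of_lt hstrict)
  -- conclude a.e. equality
  intro i j
  have hdiff : g i = g j := by
    have h1 : ‖g i - g j‖^2 = 0 := by
      rw [← real_inner_self_eq_norm_sq, real_inner_sub_sub_self, hgg i, hgg j, hterm i j]
      ring
    have h2 : g i - g j = 0 := by
      rwa [pow_eq_zero_iff (two_ne_zero), norm_eq_zero] at h1
    exact sub_eq_zero.mp h2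
  have hYeq : Y i =ᵐ[Q] Y j := by
    have := hg_ae i
    rw [hdiff] at this
    exact this.symm.trans (hg_ae j)
  filter_upwards [hYeq] with a ha
  have : X i a - μ = X j a - μ := ha
  linarith
end

section
/- Let (Ω, 𝒜, Q) be a probability space, let Y be a random variable taking values in {0, 1} almost surely, let p be a random variable taking values in [0,1], and let V be uniformly distributed on [0,1] and independent of the σ-algebra generated by p and Y. Define the randomized probability integral transform Z = V·p on the event {Y = 0} and Z = p + V·(1 − p) on the event {Y = 1}. Then Z is uniformly distributed on [0,1] if and only if Q(Y = 0 | σ(p)) = p almost surely. -/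
open MeasureTheory ProbabilityTheory Filter
open scoped NNReal ENNReal

section helpers
open intervalIntegral

lemma unif_pow_integral (n : ℕ) : ∫ x in Set.Icc (0:ℝ) 1, x ^ n = 1 / (n + 1) := by
  rw [MeasureTheory.integral_Icc_eq_integral_Ioc,
    ← intervalIntegral.integral_of_le (zero_le_one), integral_pow]
  simp

lemma affine_pow_integral (n : ℕ) (x : ℝ) :
    ∫ v in Set.Icc (0:ℝ) 1, (x + v * (1 - x)) ^ n
      = (∑ k ∈ Finset.range (n + 1), x ^ k) / (n + 1) := by
  have hn : ((n : ℝ) + 1) ≠ 0 := by positivity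
  by_cases hx : x = 1
  · subst hx
    simp only [sub_self, mul_zero, add_zero, one_pow, Finset.sum_const, Finset.card_range,
      nsmul_eq_mul, mul_one]
    rw [MeasureTheory.setIntegral_const]
    rw [measureReal_def, Real.volume_Icc]
    push_cast
    rw [div_self hn]
    simp
  · have hc : (1 - x) ≠ 0 := sub_ne_zero.2 (fun h => hx h.symm)
    have h1 : ∫ v in Set.Icc (0:ℝ) 1, (x + v * (1 - x)) ^ n
        = ∫ v in (0:ℝ)..1, ((1 - x) * v + x) ^ n := by
      rw [MeasureTheory.integral_Icc_eq_integral_Ioc,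
        ← intervalIntegral.integral_of_le (zero_le_one)]
      congr 1
      ext v
      ring_nf
    rw [h1, integral_comp_mul_add (fun u => u ^ n) hc x, integral_pow]
    have hgeom : (∑ k ∈ Finset.range (n + 1), x ^ k) * (x - 1) = x ^ (n + 1) - 1 :=
      geom_sum_mul x (n + 1)
    rw [smul_eq_mul]
    field_simp
    simp only [sub_add_cancel, mul_zero, zero_add, one_pow]
    nlinarith [hgeom]

end helpers

lemma integrable_of_icc_bound {μ : Measure ℝ} [IsFiniteMeasure μ]
    (hμ : μ (Set.Icc (0:ℝ) 1)ᶜ = 0) {g : ℝ → ℝ} (hg : AEStronglyMeasurable g μ)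
    (C : ℝ) (hb : ∀ x ∈ Set.Icc (0:ℝ) 1, ‖g x‖ ≤ C) : Integrable g μ := by
  have hae : ∀ᵐ x ∂μ, x ∈ Set.Icc (0:ℝ) 1 := mem_ae_iff.2 hμ
  refine Integrable.mono' (integrable_const C) hg ?_
  filter_upwards [hae] with x hx using hb x hx

lemma integrable_of_icc_continuous {μ : Measure ℝ} [IsFiniteMeasure μ]
    (hμ : μ (Set.Icc (0:ℝ) 1)ᶜ = 0) {g : ℝ → ℝ} (hg : Continuous g) : Integrable g μ := by
  obtain ⟨C, hC⟩ := isCompact_Icc.exists_bound_of_continuousOn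
    (hg.continuousOn : ContinuousOn g (Set.Icc (0:ℝ) 1))
  exact integrable_of_icc_bound hμ hg.aestronglyMeasurable C hC

lemma pow_integrable_of_icc {μ : Measure ℝ} [IsFiniteMeasure μ]
    (hμ : μ (Set.Icc (0:ℝ) 1)ᶜ = 0) (n : ℕ) : Integrable (fun x : ℝ => x ^ n) μ :=
  integrable_of_icc_continuous hμ (continuous_pow n)

lemma moment_ext (μ ν : Measure ℝ) [IsFiniteMeasure μ] [IsFiniteMeasure ν]
    (hμ : μ (Set.Icc (0:ℝ) 1)ᶜ = 0) (hν : ν (Set.Icc (0:ℝ) 1)ᶜ = 0)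
    (h : ∀ n : ℕ, ∫ x, x ^ n ∂μ = ∫ x, x ^ n ∂ν) : μ = ν := by
  have hpoly : ∀ q : Polynomial ℝ, ∫ x, q.eval x ∂μ = ∫ x, q.eval x ∂ν := by
    intro q
    have hev : ∀ x : ℝ, q.eval x
        = ∑ i ∈ Finset.range (q.natDegree + 1), q.coeff i * x ^ i := fun x =>
      q.eval_eq_sum_range x
    simp_rw [hev]
    rw [integral_finset_sum _ (fun i _ => (pow_integrable_of_icc hμ i).const_mul _),
      integral_finset_sum _ (fun i _ => (pow_integrable_of_icc hν i).const_mul _)]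
    exact Finset.sum_congr rfl fun i _ => by
      rw [integral_const_mul, integral_const_mul, h i]
  have hcont : ∀ g : ℝ → ℝ, Continuous g → ∫ x, g x ∂μ = ∫ x, g x ∂ν := by
    intro g hgc
    have hgiμ := integrable_of_icc_continuous hμ hgc
    have hgiν := integrable_of_icc_continuous hν hgc
    set K : ℝ := (μ Set.univ).toReal + (ν Set.univ).toReal with hK
    have hK0 : 0 ≤ K := by positivity
    have key : ∀ ε : ℝ, 0 < ε → |(∫ x, g x ∂μ) - ∫ x, g x ∂ν| ≤ ε * K := by
      intro ε hε
      obtain ⟨q, hq⟩ := exists_polynomial_near_of_continuousOn 0 1 g hgc.continuousOn ε hε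
      have hqc : Continuous fun x : ℝ => q.eval x := q.continuous_aeval
      have h1 : (∫ x, g x ∂μ) - ∫ x, g x ∂ν
          = (∫ x, (g x - q.eval x) ∂μ) - (∫ x, (g x - q.eval x) ∂ν) := by
        rw [integral_sub hgiμ (integrable_of_icc_continuous hμ hqc),
          integral_sub hgiν (integrable_of_icc_continuous hν hqc), hpoly q]
        ring
      have hbμ : ‖∫ x, (g x - q.eval x) ∂μ‖ ≤ ε * (μ Set.univ).toReal := by
        refine norm_integral_le_of_norm_le_const ?_
        filter_upwards [mem_ae_iff.2 hμ] with x hx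
        rw [Real.norm_eq_abs, abs_sub_comm]
        exact (hq x hx).le
      have hbν : ‖∫ x, (g x - q.eval x) ∂ν‖ ≤ ε * (ν Set.univ).toReal := by
        refine norm_integral_le_of_norm_le_const ?_
        filter_upwards [mem_ae_iff.2 hν] with x hx
        rw [Real.norm_eq_abs, abs_sub_comm]
        exact (hq x hx).le
      calc |(∫ x, g x ∂μ) - ∫ x, g x ∂ν|
          ≤ ‖∫ x, (g x - q.eval x) ∂μ‖ + ‖∫ x, (g x - q.eval x) ∂ν‖ := by
            rw [h1]; exact abs_sub _ _
        _ ≤ ε * K := by rw [hK, mul_add]; exact add_le_add hbμ hbν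
    have : |(∫ x, g x ∂μ) - ∫ x, g x ∂ν| ≤ 0 := by
      refine le_of_forall_pos_le_add fun ε hε => ?_
      have h2 := key (ε / (K + 1)) (by positivity)
      have : ε / (K + 1) * K ≤ ε := by
        rw [div_mul_eq_mul_div, div_le_iff₀ (by positivity)]
        nlinarith
      linarith
    have h0 : (∫ x, g x ∂μ) - ∫ x, g x ∂ν = 0 :=
      abs_eq_zero.1 (le_antisymm this (abs_nonneg _))
    linarith
  refine ext_of_forall_lintegral_eq_of_IsFiniteMeasure fun f => ?_
  have hgc : Continuous fun x : ℝ => ((f x : ℝ≥0) : ℝ) :=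
    NNReal.continuous_coe.comp f.continuous
  have h1 := BoundedContinuousFunction.toReal_lintegral_coe_eq_integral f μ
  have h2 := BoundedContinuousFunction.toReal_lintegral_coe_eq_integral f ν
  have h3 := hcont _ hgc
  rw [← ENNReal.toReal_eq_toReal_iff' (f.lintegral_lt_top_of_nnreal μ).ne
    (f.lintegral_lt_top_of_nnreal ν).ne]
  rw [h1, h2]; exact h3

/-- **Theorem 7 of Gneiting–Ranjan.** For a binary outcome `Y ∈ {0,1}`
(success identified with `Y = 0`), a probability forecast `p ∈ [0,1]`, and an auxiliary
uniform randomization variable `V` independent of `(p, Y)`, the randomized probability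
integral transform `Z = V·p` on `{Y = 0}` and `Z = p + V·(1 − p)` on `{Y = 1}` is
uniformly distributed on `[0,1]` if and only if `Q(Y = 0 | σ(p)) = p` almost surely:
probabilistic calibration and conditional calibration are equivalent. -/
theorem binary_probabilistic_calibration_iff_conditional_calibration
    {Ω : Type*} [MeasurableSpace Ω] (Q : Measure Ω) [IsProbabilityMeasure Q]
    (Y p V : Ω → ℝ)
    (hYmeas : Measurable Y) (hpmeas : Measurable p) (hVmeas : Measurable V)
    (hYval : ∀ᵐ ω ∂Q, Y ω = 0 ∨ Y ω = 1)
    (hpval : ∀ ω, p ω ∈ Set.Icc (0 : ℝ) 1)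
    (hVunif : Q.map V = volume.restrict (Set.Icc (0 : ℝ) 1))
    (hindep : IndepFun V (fun ω => (p ω, Y ω)) Q)
    (Z : Ω → ℝ)
    (hZ : Z = fun ω => if Y ω = 0 then V ω * p ω else p ω + V ω * (1 - p ω)) :
    Q.map Z = volume.restrict (Set.Icc (0 : ℝ) 1) ↔
      Q[(fun ω => if Y ω = 0 then (1 : ℝ) else 0) |
          MeasurableSpace.comap p Real.measurableSpace] =ᵐ[Q] p := by
  classical
  set W : Ω → ℝ := fun ω => if Y ω = 0 then (1 : ℝ) else 0 with hWdef
  have hm := hpmeas.comap_le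
  have hY0 : MeasurableSet {ω | Y ω = 0} := hYmeas (measurableSet_singleton 0)
  have hWmeas : Measurable W := Measurable.ite hY0 measurable_const measurable_const
  have hW01 : ∀ ω, 0 ≤ W ω ∧ W ω ≤ 1 := by
    intro ω; by_cases h : Y ω = 0 <;> simp [hWdef, h]
  have hZmeas : Measurable Z := by
    rw [hZ]
    exact Measurable.ite hY0 (hVmeas.mul hpmeas)
      (hpmeas.add (hVmeas.mul (measurable_const.sub hpmeas)))
  -- integrability helper
  have hIb : ∀ (g : Ω → ℝ) (C : ℝ), Measurable g → (∀ ω, ‖g ω‖ ≤ C) → Integrable g Q :=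
    fun g C hg hb =>
      Integrable.mono' (integrable_const C) hg.aestronglyMeasurable (Eventually.of_forall hb)
  have hpk : ∀ (k : ℕ) (ω : Ω), ‖p ω ^ k‖ ≤ 1 := by
    intro k ω
    rw [Real.norm_eq_abs, abs_of_nonneg (pow_nonneg (hpval ω).1 k)]
    exact pow_le_one₀ (hpval ω).1 (hpval ω).2
  -- the partial geometric sums
  set T : ℕ → Ω → ℝ := fun n ω => ∑ k ∈ Finset.range n, p ω ^ k with hTdef
  have hTmeas : ∀ n, Measurable (T n) := fun n =>
    Finset.measurable_sum _ (fun k _ => hpmeas.pow_const k)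
  have hTb : ∀ n ω, ‖T n ω‖ ≤ (n : ℝ) := by
    intro n ω
    calc ‖T n ω‖ ≤ ∑ k ∈ Finset.range n, ‖p ω ^ k‖ := norm_sum_le _ _
      _ ≤ ∑ _k ∈ Finset.range n, (1:ℝ) := Finset.sum_le_sum fun k _ => hpk k ω
      _ = n := by simp
  have hpm : Measurable[MeasurableSpace.comap p Real.measurableSpace] p := fun s hs => ⟨s, hs, rfl⟩
  have hTm : ∀ n, StronglyMeasurable[MeasurableSpace.comap p Real.measurableSpace] (T n) :=
    fun n => (Finset.measurable_sum (m := MeasurableSpace.comap p Real.measurableSpace) _ fun k _ => hpm.pow_const k).stronglyMeasurable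
  have hWint : Integrable W Q := hIb W 1 hWmeas fun ω => by
    rw [Real.norm_eq_abs, abs_of_nonneg (hW01 ω).1]; exact (hW01 ω).2
  -- pointwise identities
  have hpT : ∀ n ω, p ω * T n ω = T (n+1) ω - 1 := by
    intro n ω
    have h1 : p ω * T n ω = ∑ k ∈ Finset.range n, p ω ^ (k+1) := by
      rw [hTdef, Finset.mul_sum]
      exact Finset.sum_congr rfl fun k _ => (pow_succ' (p ω) k).symm
    rw [h1]
    show _ = (∑ k ∈ Finset.range (n+1), p ω ^ k) - 1
    rw [Finset.sum_range_succ' (fun k => p ω ^ k) n]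
    simp
  have hite : ∀ n ω, (if Y ω = 0 then p ω ^ n else T (n+1) ω)
      = T (n+1) ω - W ω * T (n+1) ω + W ω * p ω ^ n := by
    intro n ω
    by_cases h : Y ω = 0 <;> simp [hWdef, h]
  -- V and Z in [0,1] a.e.
  have hV01 : ∀ᵐ ω ∂Q, V ω ∈ Set.Icc (0:ℝ) 1 := by
    refine mem_ae_iff.2 ?_
    have h1 : Q (V ⁻¹' (Set.Icc (0:ℝ) 1)ᶜ) = 0 := by
      rw [← Measure.map_apply hVmeas measurableSet_Icc.compl, hVunif,
        Measure.restrict_apply measurableSet_Icc.compl]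
      simp
    rw [show {ω | V ω ∈ Set.Icc (0:ℝ) 1}ᶜ = V ⁻¹' (Set.Icc (0:ℝ) 1)ᶜ by
      ext ω; simp]
    exact h1
  have hZ01 : ∀ᵐ ω ∂Q, Z ω ∈ Set.Icc (0:ℝ) 1 := by
    filter_upwards [hV01] with ω hV
    rw [hZ]
    simp only
    have hp := hpval ω
    split_ifs with h
    · exact ⟨mul_nonneg hV.1 hp.1, mul_le_one₀ hV.2 hp.1 hp.2⟩
    · constructor
      · nlinarith [hV.1, hV.2, hp.1, hp.2]
      · nlinarith [hV.1, hV.2, hp.1, hp.2]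
  have hZn_int : ∀ n : ℕ, Integrable (fun ω => Z ω ^ n) Q := by
    intro n
    refine Integrable.mono' (integrable_const 1) (hZmeas.pow_const n).aestronglyMeasurable ?_
    filter_upwards [hZ01] with ω h
    rw [Real.norm_eq_abs, abs_of_nonneg (pow_nonneg h.1 n)]
    exact pow_le_one₀ h.1 h.2
  -- the core moment identity
  have hpY : Measurable fun ω => (p ω, Y ω) := hpmeas.prodMk hYmeas
  have hpair : Measurable fun ω => ((p ω, Y ω), V ω) := hpY.prodMk hVmeas
  have hprod : Q.map (fun ω => ((p ω, Y ω), V ω))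
      = (Q.map fun ω => (p ω, Y ω)).prod (Q.map V) :=
    (indepFun_iff_map_prod_eq_prod_map_map hpY.aemeasurable hVmeas.aemeasurable).1 hindep.symm
  have hmom : ∀ n : ℕ, ∫ ω, Z ω ^ n ∂Q
      = (∫ ω, (if Y ω = 0 then p ω ^ n else T (n+1) ω) ∂Q) / (n + 1) := by
    intro n
    set φ : (ℝ × ℝ) × ℝ → ℝ := fun q =>
      (if q.1.2 = 0 then q.2 * q.1.1 else q.1.1 + q.2 * (1 - q.1.1)) ^ n with hφdef
    have hsetm : MeasurableSet {q : (ℝ × ℝ) × ℝ | q.1.2 = 0} :=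
      (measurable_fst.snd) (measurableSet_singleton 0)
    have hφm : Measurable φ :=
      (Measurable.ite hsetm (measurable_snd.mul measurable_fst.fst)
        (measurable_fst.fst.add (measurable_snd.mul
          (measurable_const.sub measurable_fst.fst)))).pow_const n
    have hcomp : ∀ ω, Z ω ^ n = φ ((p ω, Y ω), V ω) := by
      intro ω; rw [hZ]
    have step1 : ∫ ω, Z ω ^ n ∂Q = ∫ q, φ q ∂((Q.map fun ω => (p ω, Y ω)).prod (Q.map V)) := by
      rw [← hprod, integral_map hpair.aemeasurable hφm.aestronglyMeasurable]
      exact integral_congr_ae (Eventually.of_forall fun ω => hcomp ω)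
    have hφint : Integrable φ ((Q.map fun ω => (p ω, Y ω)).prod (Q.map V)) := by
      rw [← hprod, integrable_map_measure hφm.aestronglyMeasurable hpair.aemeasurable]
      exact (hZn_int n).congr (Eventually.of_forall fun ω => by
        rw [Function.comp]; exact (hcomp ω))
    have step2 : ∫ q, φ q ∂((Q.map fun ω => (p ω, Y ω)).prod (Q.map V))
        = ∫ w, (∫ v, φ (w, v) ∂(Q.map V)) ∂(Q.map fun ω => (p ω, Y ω)) :=
      integral_prod φ hφint
    have step3 : ∀ w : ℝ × ℝ, (∫ v, φ (w, v) ∂(Q.map V))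
        = (if w.2 = 0 then w.1 ^ n else ∑ k ∈ Finset.range (n+1), w.1 ^ k) / (n + 1) := by
      intro w
      rw [hVunif]
      by_cases hw : w.2 = 0
      · simp only [hφdef, hw, if_true]
        simp_rw [mul_pow]
        rw [integral_mul_const, unif_pow_integral n]
        ring
      · simp only [hφdef, hw, if_false]
        exact affine_pow_integral n w.1
    have hψm : Measurable fun w : ℝ × ℝ =>
        (if w.2 = 0 then w.1 ^ n else ∑ k ∈ Finset.range (n+1), w.1 ^ k) / ((n : ℝ) + 1) :=
      (Measurable.ite (measurable_snd (measurableSet_singleton 0))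
        (measurable_fst.pow_const n)
        (Finset.measurable_sum _ fun k _ => measurable_fst.pow_const k)).div_const _
    have step4 : ∫ w, (∫ v, φ (w, v) ∂(Q.map V)) ∂(Q.map fun ω => (p ω, Y ω))
        = ∫ ω, (if Y ω = 0 then p ω ^ n else T (n+1) ω) / ((n:ℝ) + 1) ∂Q := by
      rw [show (fun w : ℝ × ℝ => ∫ v, φ (w, v) ∂(Q.map V))
          = fun w : ℝ × ℝ => (if w.2 = 0 then w.1 ^ n
              else ∑ k ∈ Finset.range (n+1), w.1 ^ k) / ((n:ℝ) + 1) from funext step3]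
      rw [integral_map hpY.aemeasurable hψm.aestronglyMeasurable]
    rw [step1, step2, step4, integral_div]
  -- integrabilities
  have hTint : ∀ n, Integrable (T n) Q := fun n => hIb (T n) n (hTmeas n) (hTb n)
  have hWTint : ∀ n, Integrable (fun ω => W ω * T n ω) Q := by
    intro n
    refine hIb _ (n : ℝ) (hWmeas.mul (hTmeas n)) fun ω => ?_
    rw [norm_mul]
    calc ‖W ω‖ * ‖T n ω‖ ≤ 1 * (n:ℝ) := by
          refine mul_le_mul ?_ (hTb n ω) (norm_nonneg _) zero_le_one
          rw [Real.norm_eq_abs, abs_of_nonneg (hW01 ω).1]; exact (hW01 ω).2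
      _ = n := one_mul _
  have hpTint : ∀ n, Integrable (fun ω => p ω * T n ω) Q := by
    intro n
    refine hIb _ (n : ℝ) (hpmeas.mul (hTmeas n)) fun ω => ?_
    rw [norm_mul]
    calc ‖p ω‖ * ‖T n ω‖ ≤ 1 * (n:ℝ) := by
          refine mul_le_mul (hpk 1 ω |>.trans_eq' (by rw [pow_one])) (hTb n ω)
            (norm_nonneg _) zero_le_one
      _ = n := one_mul _
  have hWpn_int : ∀ n : ℕ, Integrable (fun ω => W ω * p ω ^ n) Q := by
    intro n
    refine hIb _ 1 (hWmeas.mul (hpmeas.pow_const n)) fun ω => ?_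
    rw [norm_mul]
    calc ‖W ω‖ * ‖p ω ^ n‖ ≤ 1 * 1 := by
          refine mul_le_mul ?_ (hpk n ω) (norm_nonneg _) zero_le_one
          rw [Real.norm_eq_abs, abs_of_nonneg (hW01 ω).1]; exact (hW01 ω).2
      _ = 1 := one_mul _
  -- key reformulation of the integral in hmom
  have hIeq : ∀ n : ℕ, ∫ ω, (if Y ω = 0 then p ω ^ n else T (n+1) ω) ∂Q
      = (∫ ω, T (n+1) ω ∂Q) - (∫ ω, W ω * T (n+1) ω ∂Q) + ∫ ω, W ω * p ω ^ n ∂Q := by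
    intro n
    rw [show (fun ω => if Y ω = 0 then p ω ^ n else T (n+1) ω)
        = fun ω => T (n+1) ω - W ω * T (n+1) ω + W ω * p ω ^ n from funext (hite n)]
    have h1 : Integrable (fun ω => T (n+1) ω - W ω * T (n+1) ω) Q :=
      (hTint (n+1)).sub (hWTint (n+1))
    rw [integral_add h1 (hWpn_int n), integral_sub (hTint (n+1)) (hWTint (n+1))]
  have hppow_int : ∀ n : ℕ, Integrable (fun ω => p ω ^ n) Q :=
    fun n => hIb _ 1 (hpmeas.pow_const n) (hpk n)
  have hTconst : ∀ n : ℕ, ∫ ω, p ω * T n ω ∂Q = (∫ ω, T (n+1) ω ∂Q) - 1 := by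
    intro n
    rw [integral_congr_ae (Eventually.of_forall (hpT n))]
    rw [integral_sub (hTint (n+1)) (integrable_const 1)]
    simp
  have hsplitW : ∀ n : ℕ, ∫ ω, W ω * T (n+1) ω ∂Q
      = (∫ ω, W ω * T n ω ∂Q) + ∫ ω, W ω * p ω ^ n ∂Q := by
    intro n
    rw [← integral_add (hWTint n) (hWpn_int n)]
    refine integral_congr_ae (Eventually.of_forall fun ω => ?_)
    have hTsucc : T (n+1) ω = T n ω + p ω ^ n := Finset.sum_range_succ _ n
    show W ω * T (n+1) ω = W ω * T n ω + W ω * p ω ^ n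
    rw [hTsucc]; ring
  have hSM : SigmaFinite (Q.trim hm) := by infer_instance
  haveI : IsProbabilityMeasure (volume.restrict (Set.Icc (0:ℝ) 1)) := by
    constructor
    rw [Measure.restrict_apply_univ, Real.volume_Icc]
    norm_num
  constructor
  · -- probabilistic calibration → conditional calibration : the hard direction
    intro hu
    have hZmom : ∀ n : ℕ, ∫ ω, Z ω ^ n ∂Q = 1 / ((n:ℝ) + 1) := by
      intro n
      have h1 : ∫ x, x ^ n ∂(Q.map Z) = ∫ ω, Z ω ^ n ∂Q :=
        integral_map hZmeas.aemeasurable ((continuous_pow n).measurable).aestronglyMeasurable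
      rw [← h1, hu]
      exact unif_pow_integral n
    have hI1 : ∀ n : ℕ, ∫ ω, (if Y ω = 0 then p ω ^ n else T (n+1) ω) ∂Q = 1 := by
      intro n
      have hne : ((n:ℝ) + 1) ≠ 0 := by positivity
      have h := (hmom n).symm.trans (hZmom n)
      field_simp at h
      exact h
    -- hence ∫ (W - p) * T n = 0 for all n
    have hWT : ∀ n : ℕ, ∫ ω, W ω * T n ω ∂Q = ∫ ω, p ω * T n ω ∂Q := by
      intro n
      have h1 := hI1 n
      rw [hIeq n] at h1
      linarith [hsplitW n, hTconst n]
    have hWpTint : ∀ n, Integrable (fun ω => (W ω - p ω) * T n ω) Q :=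
      fun n => ((hWTint n).sub (hpTint n)).congr
        (Eventually.of_forall fun ω => by
          show W ω * T n ω - p ω * T n ω = (W ω - p ω) * T n ω; ring)
    have hppn_int : ∀ n : ℕ, Integrable (fun ω => p ω * p ω ^ n) Q :=
      fun n => (hppow_int (n+1)).congr (Eventually.of_forall fun ω => pow_succ' (p ω) n)
    have hWppint : ∀ n : ℕ, Integrable (fun ω => (W ω - p ω) * p ω ^ n) Q :=
      fun n => ((hWpn_int n).sub (hppn_int n)).congr
        (Eventually.of_forall fun ω => by
          show W ω * p ω ^ n - p ω * p ω ^ n = (W ω - p ω) * p ω ^ n; ring)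
    have hdiff : ∀ n : ℕ, ∫ ω, (W ω - p ω) * T n ω ∂Q = 0 := by
      intro n
      have h1 : ∫ ω, (W ω - p ω) * T n ω ∂Q
          = (∫ ω, W ω * T n ω ∂Q) - ∫ ω, p ω * T n ω ∂Q := by
        rw [← integral_sub (hWTint n) (hpTint n)]
        exact integral_congr_ae (Eventually.of_forall fun ω => by
          show (W ω - p ω) * T n ω = W ω * T n ω - p ω * T n ω; ring)
      rw [h1, hWT n]; ring
    have hWpk : ∀ k : ℕ, ∫ ω, (W ω - p ω) * p ω ^ k ∂Q = 0 := by
      intro k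
      have h1 := hdiff (k+1)
      have h2 := hdiff k
      have hsplit : ∫ ω, (W ω - p ω) * T (k+1) ω ∂Q
          = (∫ ω, (W ω - p ω) * T k ω ∂Q) + ∫ ω, (W ω - p ω) * p ω ^ k ∂Q := by
        rw [← integral_add (hWpTint k) (hWppint k)]
        refine integral_congr_ae (Eventually.of_forall fun ω => ?_)
        have hTsucc : T (k+1) ω = T k ω + p ω ^ k := Finset.sum_range_succ _ k
        show (W ω - p ω) * T (k+1) ω = (W ω - p ω) * T k ω + (W ω - p ω) * p ω ^ k
        rw [hTsucc]; ring
      rw [hsplit, h2] at h1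
      linarith
    -- build the two finite measures on ℝ and compare moments
    set f : Ω → ℝ := fun ω => W ω - p ω with hfdef
    have hfmeas : Measurable f := hWmeas.sub hpmeas
    have hfb : ∀ ω, |f ω| ≤ 1 := by
      intro ω
      have h1 := hW01 ω
      have h2 := hpval ω
      have hfx : f ω = W ω - p ω := rfl
      rw [abs_le, hfx]
      constructor
      · nlinarith [h1.1, h2.2]
      · nlinarith [h1.2, h2.1]
    have hmax : ∀ a : ℝ, max a 0 - max (-a) 0 = a := by
      intro a
      rcases le_total a 0 with h | h
      · rw [max_eq_right h, max_eq_left (neg_nonneg.2 h)]; ring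
      · rw [max_eq_left h, max_eq_right (neg_nonpos.2 h)]; ring
    set gp : Ω → ℝ := fun ω => max (f ω) 0 with hgpdef
    set gm : Ω → ℝ := fun ω => max (-f ω) 0 with hgmdef
    have hgpmeas : Measurable gp := hfmeas.max measurable_const
    have hgmmeas : Measurable gm := hfmeas.neg.max measurable_const
    have hgpb : ∀ ω, ‖gp ω‖ ≤ 1 := fun ω => by
      rw [Real.norm_eq_abs, abs_of_nonneg (le_max_right _ _)]
      exact max_le ((le_abs_self _).trans (hfb ω)) zero_le_one
    have hgmb : ∀ ω, ‖gm ω‖ ≤ 1 := fun ω => by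
      rw [Real.norm_eq_abs, abs_of_nonneg (le_max_right _ _)]
      exact max_le ((neg_le_abs _).trans (hfb ω)) zero_le_one
    have hgpint : Integrable gp Q := hIb gp 1 hgpmeas hgpb
    have hgmint : Integrable gm Q := hIb gm 1 hgmmeas hgmb
    have hgppk : ∀ k : ℕ, Integrable (fun ω => gp ω * p ω ^ k) Q := by
      intro k
      refine hIb _ 1 (hgpmeas.mul (hpmeas.pow_const k)) fun ω => ?_
      rw [norm_mul]
      calc ‖gp ω‖ * ‖p ω ^ k‖ ≤ 1 * 1 :=
            mul_le_mul (hgpb ω) (hpk k ω) (norm_nonneg _) zero_le_one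
        _ = 1 := one_mul _
    have hgmpk : ∀ k : ℕ, Integrable (fun ω => gm ω * p ω ^ k) Q := by
      intro k
      refine hIb _ 1 (hgmmeas.mul (hpmeas.pow_const k)) fun ω => ?_
      rw [norm_mul]
      calc ‖gm ω‖ * ‖p ω ^ k‖ ≤ 1 * 1 :=
            mul_le_mul (hgmb ω) (hpk k ω) (norm_nonneg _) zero_le_one
        _ = 1 := one_mul _
    have hofReal : ∀ a : ℝ, ENNReal.ofReal a = ((a.toNNReal : ℝ≥0) : ℝ≥0∞) := fun a => rfl
    set ν₁ : Measure ℝ := (Q.withDensity fun ω => (((f ω).toNNReal : ℝ≥0) : ℝ≥0∞)).map p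
      with hν₁def
    set ν₂ : Measure ℝ := (Q.withDensity fun ω => ((((-f ω)).toNNReal : ℝ≥0) : ℝ≥0∞)).map p
      with hν₂def
    have hd1meas : Measurable fun ω => (f ω).toNNReal := hfmeas.real_toNNReal
    have hd2meas : Measurable fun ω => (-f ω).toNNReal := hfmeas.neg.real_toNNReal
    have hfinwd : ∀ (g : Ω → ℝ), (∀ ω, g ω ≤ 1) →
        IsFiniteMeasure (Q.withDensity fun ω => (((g ω).toNNReal : ℝ≥0) : ℝ≥0∞)) := by
      intro g hg
      constructor
      rw [withDensity_apply _ MeasurableSet.univ, setLIntegral_univ]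
      calc ∫⁻ ω, (((g ω).toNNReal : ℝ≥0) : ℝ≥0∞) ∂Q ≤ ∫⁻ _, 1 ∂Q := by
            refine lintegral_mono fun ω => ?_
            rw [← hofReal]
            exact ENNReal.ofReal_le_one.2 (hg ω)
        _ = 1 := by simp
        _ < ⊤ := ENNReal.one_lt_top
    haveI hfin1 : IsFiniteMeasure (Q.withDensity fun ω => (((f ω).toNNReal : ℝ≥0) : ℝ≥0∞)) :=
      hfinwd f fun ω => (abs_le.1 (hfb ω)).2
    haveI hfin2 : IsFiniteMeasure (Q.withDensity fun ω => ((((-f ω)).toNNReal : ℝ≥0) : ℝ≥0∞)) :=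
      hfinwd (fun ω => -f ω) fun ω => by
        have := (abs_le.1 (hfb ω)).1
        show -f ω ≤ 1
        linarith
    haveI hfin1' : IsFiniteMeasure ν₁ := by
      rw [hν₁def]
      exact Measure.isFiniteMeasure_map _ _
    haveI hfin2' : IsFiniteMeasure ν₂ := by
      rw [hν₂def]
      exact Measure.isFiniteMeasure_map _ _
    have hpre : p ⁻¹' (Set.Icc (0:ℝ) 1)ᶜ = ∅ :=
      Set.eq_empty_iff_forall_notMem.2 fun ω h => h (hpval ω)
    have hsupp1 : ν₁ (Set.Icc (0:ℝ) 1)ᶜ = 0 := by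
      rw [hν₁def, Measure.map_apply hpmeas measurableSet_Icc.compl, hpre, measure_empty]
    have hsupp2 : ν₂ (Set.Icc (0:ℝ) 1)ᶜ = 0 := by
      rw [hν₂def, Measure.map_apply hpmeas measurableSet_Icc.compl, hpre, measure_empty]
    have hmom1 : ∀ k : ℕ, ∫ x, x ^ k ∂ν₁ = ∫ ω, gp ω * p ω ^ k ∂Q := by
      intro k
      rw [hν₁def, integral_map hpmeas.aemeasurable ((continuous_pow k).measurable).aestronglyMeasurable,
        integral_withDensity_eq_integral_smul hd1meas]
      refine integral_congr_ae (Eventually.of_forall fun ω => ?_)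
      show (f ω).toNNReal • p ω ^ k = gp ω * p ω ^ k
      rw [NNReal.smul_def, Real.coe_toNNReal', smul_eq_mul]
    have hmom2 : ∀ k : ℕ, ∫ x, x ^ k ∂ν₂ = ∫ ω, gm ω * p ω ^ k ∂Q := by
      intro k
      rw [hν₂def, integral_map hpmeas.aemeasurable ((continuous_pow k).measurable).aestronglyMeasurable,
        integral_withDensity_eq_integral_smul hd2meas]
      refine integral_congr_ae (Eventually.of_forall fun ω => ?_)
      show (-f ω).toNNReal • p ω ^ k = gm ω * p ω ^ k
      rw [NNReal.smul_def, Real.coe_toNNReal', smul_eq_mul]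
    have hmomeq : ∀ k : ℕ, ∫ x, x ^ k ∂ν₁ = ∫ x, x ^ k ∂ν₂ := by
      intro k
      rw [hmom1 k, hmom2 k]
      have h1 : ∫ ω, (gp ω * p ω ^ k - gm ω * p ω ^ k) ∂Q = 0 := by
        rw [integral_congr_ae (Eventually.of_forall (fun ω => show
          gp ω * p ω ^ k - gm ω * p ω ^ k = (W ω - p ω) * p ω ^ k by
            rw [hgpdef, hgmdef, ← sub_mul]
            simp only
            rw [hmax (f ω)]))]
        exact hWpk k
      rw [integral_sub (hgppk k) (hgmpk k)] at h1
      linarith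
    have hνeq : ν₁ = ν₂ := moment_ext ν₁ ν₂ hsupp1 hsupp2 hmomeq
    -- conclude conditional calibration via uniqueness of conditional expectation
    refine (ae_eq_condExp_of_forall_setIntegral_eq hm hWint
      (fun s _ _ => (hIb p 1 hpmeas fun ω => by
        rw [Real.norm_eq_abs, abs_of_nonneg (hpval ω).1]; exact (hpval ω).2).integrableOn)
      ?_ ⟨p, hpm.stronglyMeasurable, EventuallyEq.rfl⟩).symm
    rintro s ⟨B, hB, rfl⟩ -
    have hA : MeasurableSet (p ⁻¹' B) := hpmeas hB
    have htnn : ∀ a : ℝ, (max a 0).toNNReal = a.toNNReal := by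
      intro a
      rcases le_total a 0 with h | h
      · rw [max_eq_right h, Real.toNNReal_of_nonpos h, Real.toNNReal_zero]
      · rw [max_eq_left h]
    have hwd : ∀ (g : Ω → ℝ), Measurable g → Integrable (fun ω => max (g ω) 0) Q →
        (Q.withDensity fun ω => (((g ω).toNNReal : ℝ≥0) : ℝ≥0∞)) (p ⁻¹' B)
          = ENNReal.ofReal (∫ ω in p ⁻¹' B, max (g ω) 0 ∂Q) := by
      intro g hgmeas hgint
      rw [withDensity_apply _ hA]
      rw [ofReal_integral_eq_lintegral_ofReal hgint.integrableOn
        (Eventually.of_forall fun ω => le_max_right _ _)]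
      refine lintegral_congr fun ω => ?_
      rw [hofReal, htnn]
    have hν1B : ν₁ B = ENNReal.ofReal (∫ ω in p ⁻¹' B, gp ω ∂Q) := by
      rw [hν₁def, Measure.map_apply hpmeas hB]
      exact hwd f hfmeas hgpint
    have hν2B : ν₂ B = ENNReal.ofReal (∫ ω in p ⁻¹' B, gm ω ∂Q) := by
      rw [hν₂def, Measure.map_apply hpmeas hB]
      exact hwd (fun ω => -f ω) hfmeas.neg hgmint
    have hBeq : ∫ ω in p ⁻¹' B, gp ω ∂Q = ∫ ω in p ⁻¹' B, gm ω ∂Q := by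
      have h1 : ν₁ B = ν₂ B := by rw [hνeq]
      rw [hν1B, hν2B] at h1
      have hp1 : 0 ≤ ∫ ω in p ⁻¹' B, gp ω ∂Q :=
        setIntegral_nonneg hA fun ω _ => le_max_right _ _
      have hp2 : 0 ≤ ∫ ω in p ⁻¹' B, gm ω ∂Q :=
        setIntegral_nonneg hA fun ω _ => le_max_right _ _
      exact (ENNReal.ofReal_eq_ofReal_iff hp1 hp2).1 h1
    have hfzero : ∫ ω in p ⁻¹' B, (W ω - p ω) ∂Q = 0 := by
      have h1 : ∫ ω in p ⁻¹' B, (gp ω - gm ω) ∂Q = 0 := by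
        rw [integral_sub hgpint.integrableOn hgmint.integrableOn, hBeq]
        ring
      rw [← h1]
      refine integral_congr_ae (Eventually.of_forall fun ω => ?_)
      rw [hgpdef, hgmdef]
      simp only
      rw [hmax (f ω)]
    have hWp_int : Integrable (fun ω => W ω - p ω) Q :=
      hWint.sub (hIb p 1 hpmeas fun ω => by
        rw [Real.norm_eq_abs, abs_of_nonneg (hpval ω).1]; exact (hpval ω).2)
    rw [integral_sub hWint.integrableOn ((hIb p 1 hpmeas fun ω => by
      rw [Real.norm_eq_abs, abs_of_nonneg (hpval ω).1]; exact (hpval ω).2).integrableOn)] at hfzero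
    linarith
  · -- conditional calibration → probabilistic calibration
    intro hc
    have hWTc : ∀ n : ℕ, ∫ ω, W ω * T n ω ∂Q = ∫ ω, p ω * T n ω ∂Q := by
      intro n
      have hTWint : Integrable (fun ω => T n ω * W ω) Q :=
        (hWTint n).congr (Eventually.of_forall fun ω => by ring)
      have h1 := condExp_stronglyMeasurable_mul_of_bound hm (hTm n) hWint (n : ℝ)
        (Eventually.of_forall (hTb n))
      have h2 : Q[(fun ω => T n ω * W ω) | MeasurableSpace.comap p Real.measurableSpace]
          =ᵐ[Q] fun ω => T n ω * p ω := by
        refine h1.trans ?_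
        filter_upwards [hc] with ω hω
        simp only [Pi.mul_apply]
        rw [hω]
      calc ∫ ω, W ω * T n ω ∂Q = ∫ ω, T n ω * W ω ∂Q :=
            integral_congr_ae (Eventually.of_forall fun ω => by ring)
        _ = ∫ ω, (Q[(fun ω => T n ω * W ω) |
              MeasurableSpace.comap p Real.measurableSpace]) ω ∂Q :=
            (integral_condExp hm).symm
        _ = ∫ ω, T n ω * p ω ∂Q := integral_congr_ae h2
        _ = ∫ ω, p ω * T n ω ∂Q :=
            integral_congr_ae (Eventually.of_forall fun ω => by ring)
    have hI1 : ∀ n : ℕ, ∫ ω, (if Y ω = 0 then p ω ^ n else T (n+1) ω) ∂Q = 1 := by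
      intro n
      rw [hIeq n]
      linarith [hWTc n, hsplitW n, hTconst n]
    haveI : IsProbabilityMeasure (Q.map Z) := Measure.isProbabilityMeasure_map hZmeas.aemeasurable
    refine moment_ext _ _ ?_ ?_ ?_
    · rw [Measure.map_apply hZmeas measurableSet_Icc.compl]
      have h1 := mem_ae_iff.1 hZ01
      rw [show {ω | Z ω ∈ Set.Icc (0:ℝ) 1}ᶜ = Z ⁻¹' (Set.Icc (0:ℝ) 1)ᶜ by ext ω; simp] at h1
      exact h1
    · rw [Measure.restrict_apply measurableSet_Icc.compl]
      simp
    · intro n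
      rw [integral_map hZmeas.aemeasurable ((continuous_pow n).measurable).aestronglyMeasurable]
      have h1 : ∫ ω, Z ω ^ n ∂Q = 1 / ((n:ℝ) + 1) := by
        rw [hmom n, hI1 n]
      rw [h1, unif_pow_integral n]
end

section
/- Let (Ω, 𝒜, Q) be a standard Borel probability space, let 𝒜₀ ⊆ 𝒜 be a sub-σ-algebra, let Y be a real-valued random variable, and let V be uniformly distributed on [0,1] and independent of the σ-algebra generated by 𝒜₀ and Y. Let ω ↦ κ_ω be a regular conditional distribution of Y given 𝒜₀, i.e., an 𝒜₀-measurable family of Borel probability measures on ℝ such that for every Borel set B ⊆ ℝ, κ_·(B) = Q(Y ∈ B | 𝒜₀) almost surely. Then: (a) for every y ∈ ℝ, E_Q[κ_·((−∞, y])] = Q(Y ≤ y); and (b) the random variable Z(ω) = κ_ω((−∞, Y(ω))) + V(ω)·κ_ω({Y(ω)}) is uniformly distributed on [0,1]. -/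
open MeasureTheory ProbabilityTheory Set
open scoped ENNReal

namespace IdealForecastAux

/-! ### The elementary function describing the conditional probability over `V` -/

noncomputable def hfun (t a b : ℝ) : ℝ :=
  if b = 0 then (if a ≤ t then 1 else 0) else min 1 (max 0 ((t - a) / b))

lemma hfun_measurable (t : ℝ) : Measurable (fun p : ℝ × ℝ => hfun t p.1 p.2) := by
  unfold hfun
  have h1 : MeasurableSet {p : ℝ × ℝ | p.2 = 0} := by
    have : {p : ℝ × ℝ | p.2 = 0} = Prod.snd ⁻¹' {(0:ℝ)} := rfl
    rw [this]; exact measurable_snd (measurableSet_singleton 0)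
  refine Measurable.ite h1 ?_ ?_
  · refine Measurable.ite ?_ measurable_const measurable_const
    exact measurableSet_le measurable_fst measurable_const
  · exact measurable_const.min (measurable_const.max
      ((measurable_fst.const_sub t).div measurable_snd))

lemma vol_eq (t a b : ℝ) (hb : 0 ≤ b) :
    (volume.restrict (Icc (0:ℝ) 1)) {v | a + v * b ≤ t} = ENNReal.ofReal (hfun t a b) := by
  rw [Measure.restrict_apply' measurableSet_Icc]
  unfold hfun
  rcases eq_or_lt_of_le hb with hb0 | hb0
  · rw [if_pos hb0.symm]
    by_cases hat : a ≤ t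
    · rw [if_pos hat]
      have : {v : ℝ | a + v * b ≤ t} = univ := by
        ext v; simp [← hb0, hat]
      rw [this, univ_inter, Real.volume_Icc]
      norm_num
    · rw [if_neg hat]
      have : {v : ℝ | a + v * b ≤ t} = ∅ := by
        ext v; simp [← hb0, hat]
      rw [this, empty_inter]
      simp
  · rw [if_neg (ne_of_gt hb0)]
    have hset : {v : ℝ | a + v * b ≤ t} = Iic ((t - a) / b) := by
      ext v
      simp only [mem_setOf_eq, mem_Iic]
      rw [le_div_iff₀ hb0]
      constructor <;> intro h <;> linarith
    have hset2 : Iic ((t - a) / b) ∩ Icc (0:ℝ) 1 = Icc 0 (min ((t - a) / b) 1) := by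
      ext v
      simp only [mem_inter_iff, mem_Iic, mem_Icc, le_min_iff]
      tauto
    rw [hset, hset2, Real.volume_Icc]
    set c := (t - a) / b with hc
    rcases le_or_gt 0 c with h0c | h0c
    · rw [max_eq_right h0c, sub_zero, min_comm]
    · rw [max_eq_left h0c.le]
      rw [min_eq_left (by linarith : c ≤ 1), sub_zero]
      rw [ENNReal.ofReal_eq_zero.mpr h0c.le]
      norm_num

/-! ### A null-set lemma -/

lemma null_of (μ : Measure ℝ) {S : Set ℝ} (h : ∀ y ∈ S, μ (S ∩ Iic y) = 0) : μ S = 0 := by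
  rcases S.eq_empty_or_nonempty with rfl | hne
  · simp
  by_cases hbdd : BddAbove S
  · set s := sSup S with hs
    have hsub : S ⊆ (⋃ q : {q : ℚ // ∃ y ∈ S, (q : ℝ) ≤ y}, (S ∩ Iic (q : ℝ))) ∪ (S ∩ {s}) := by
      intro y hy
      by_cases hys : y = s
      · right; exact ⟨hy, by simp [hys]⟩
      · left
        have hlt : y < s := lt_of_le_of_ne (le_csSup hbdd hy) hys
        obtain ⟨y', hy'S, hy'⟩ := exists_lt_of_lt_csSup hne hlt
        obtain ⟨q, hq1, hq2⟩ := exists_rat_btwn hy'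
        exact mem_iUnion.mpr ⟨⟨q, y', hy'S, hq2.le⟩, hy, hq1.le⟩
    refine measure_mono_null hsub (measure_union_null ?_ ?_)
    · refine measure_iUnion_null fun q => ?_
      obtain ⟨y', hy'S, hy'⟩ := q.2
      exact measure_mono_null (inter_subset_inter_right _ (Iic_subset_Iic.2 hy')) (h y' hy'S)
    · by_cases hsS : s ∈ S
      · refine measure_mono_null ?_ (h s hsS)
        rintro x ⟨hx1, hx2⟩
        simp only [mem_singleton_iff] at hx2
        exact ⟨hx1, hx2.le⟩
      · have : S ∩ {s} = ∅ := by
          ext x; simp only [mem_inter_iff, mem_singleton_iff, mem_empty_iff_false, iff_false,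
            not_and]
          rintro hx rfl; exact hsS hx
        simp [this]
  · have hkey : ∀ n : ℕ, μ (S ∩ Iic (n : ℝ)) = 0 := by
      intro n
      obtain ⟨y, hyS, hy⟩ : ∃ y ∈ S, (n : ℝ) ≤ y := by
        rw [not_bddAbove_iff] at hbdd
        obtain ⟨y, hyS, hy⟩ := hbdd (n : ℝ)
        exact ⟨y, hyS, hy.le⟩
      exact measure_mono_null (inter_subset_inter_right _ (Iic_subset_Iic.2 hy)) (h y hyS)
    refine measure_mono_null (fun y hy => ?_) (measure_iUnion_null hkey)
    exact mem_iUnion.mpr ⟨⌈y⌉₊, hy, Nat.le_ceil y⟩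

/-! ### The deterministic randomized PIT identity -/

lemma pit (μ : Measure ℝ) [IsProbabilityMeasure μ] (t : ℝ) :
    ∫⁻ y, ENNReal.ofReal (hfun t (μ (Iio y)).toReal (μ {y}).toReal) ∂μ
      = ENNReal.ofReal (min t 1) := by
  have hFin : ∀ s : Set ℝ, μ s ≠ ∞ := fun s => measure_ne_top μ s
  have hIicU : ∀ y : ℝ, μ (Iic y) = μ (Iio y) + μ {y} := by
    intro y
    rw [← Iio_union_right, measure_union (by simp) (measurableSet_singleton y)]
  have htoR : ∀ y : ℝ, (μ (Iic y)).toReal = (μ (Iio y)).toReal + (μ {y}).toReal := by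
    intro y
    rw [hIicU y, ENNReal.toReal_add (hFin _) (hFin _)]
  have hIic_le_one : ∀ y : ℝ, (μ (Iic y)).toReal ≤ 1 := by
    intro y
    have := prob_le_one (μ := μ) (s := Iic y)
    calc (μ (Iic y)).toReal ≤ (1 : ℝ≥0∞).toReal := ENNReal.toReal_mono (by simp) this
      _ = 1 := by simp
  have hsing_zero : ∀ y : ℝ, (μ {y}).toReal = 0 → μ {y} = 0 := by
    intro y hy
    rcases (ENNReal.toReal_eq_zero_iff _).mp hy with h | h
    · exact h
    · exact absurd h (hFin _)
  have hIio_zero : ∀ y : ℝ, (μ (Iio y)).toReal = 0 → μ (Iio y) = 0 := by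
    intro y hy
    rcases (ENNReal.toReal_eq_zero_iff _).mp hy with h | h
    · exact h
    · exact absurd h (hFin _)
  rcases le_or_gt t 0 with ht0 | ht0
  · -- case t ≤ 0 : integrand vanishes a.e.
    have hS : μ {y : ℝ | μ (Iic y) = 0} = 0 := by
      apply null_of
      intro y hy
      exact measure_mono_null inter_subset_right hy
    have hae : ∀ᵐ y ∂μ, ENNReal.ofReal (hfun t (μ (Iio y)).toReal (μ {y}).toReal) = 0 := by
      have hcompl := measure_eq_zero_iff_ae_notMem.mp hS
      filter_upwards [hcompl] with y hy
      unfold hfun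
      by_cases hb : (μ {y}).toReal = 0
      · rw [if_pos hb]
        have hne : ¬ (μ (Iio y)).toReal ≤ t := by
          intro hle
          have h0 : (μ (Iio y)).toReal = 0 :=
            le_antisymm (hle.trans ht0) ENNReal.toReal_nonneg
          exact hy (by rw [hIicU y, hIio_zero y h0, hsing_zero y hb, add_zero])
        rw [if_neg hne]; simp
      · rw [if_neg hb]
        have hbpos : 0 < (μ {y}).toReal :=
          lt_of_le_of_ne ENNReal.toReal_nonneg (Ne.symm hb)
        have hdiv : (t - (μ (Iio y)).toReal) / (μ {y}).toReal ≤ 0 := by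
          apply div_nonpos_of_nonpos_of_nonneg
          · have := ENNReal.toReal_nonneg (a := μ (Iio y)); linarith
          · exact hbpos.le
        rw [max_eq_left hdiv, min_eq_right zero_le_one, ENNReal.ofReal_zero]
    rw [lintegral_congr_ae hae, lintegral_zero]
    rw [min_eq_left (by linarith : t ≤ 1)]
    exact (ENNReal.ofReal_eq_zero.mpr ht0).symm
  rcases le_or_gt 1 t with ht1 | ht1
  · -- case 1 ≤ t : integrand is 1
    have hone : ∀ y : ℝ, hfun t (μ (Iio y)).toReal (μ {y}).toReal = 1 := by
      intro y
      have hIle : (μ (Iio y)).toReal ≤ 1 := by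
        have h1 : (μ (Iio y)).toReal ≤ (μ (Iic y)).toReal :=
          ENNReal.toReal_mono (hFin _) (measure_mono Iio_subset_Iic_self)
        linarith [hIic_le_one y]
      unfold hfun
      by_cases hb : (μ {y}).toReal = 0
      · rw [if_pos hb, if_pos (hIle.trans ht1)]
      · rw [if_neg hb]
        have hbpos : 0 < (μ {y}).toReal :=
          lt_of_le_of_ne ENNReal.toReal_nonneg (Ne.symm hb)
        have hsum : (μ (Iio y)).toReal + (μ {y}).toReal ≤ 1 := by
          rw [← htoR y]; exact hIic_le_one y
        have h1le : (1 : ℝ) ≤ (t - (μ (Iio y)).toReal) / (μ {y}).toReal := by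
          rw [le_div_iff₀ hbpos]; linarith
        rw [min_eq_left (h1le.trans (le_max_right 0 _))]
    have : (fun y => ENNReal.ofReal (hfun t (μ (Iio y)).toReal (μ {y}).toReal))
        = fun _ => (1 : ℝ≥0∞) := by
      funext y; rw [hone y, ENNReal.ofReal_one]
    rw [this, lintegral_one, measure_univ, min_eq_right ht1, ENNReal.ofReal_one]
  · -- main case 0 < t < 1
    set F : ℝ → ℝ := fun y => (μ (Iic y)).toReal with hF
    have hFmono : Monotone F := fun a b hab =>
      ENNReal.toReal_mono (hFin _) (measure_mono (Iic_subset_Iic.2 hab))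
    set A : Set ℝ := {y | t ≤ F y} with hA
    have hAne : A.Nonempty := by
      have h1 : Filter.Tendsto F Filter.atTop (nhds 1) := by
        have h := tendsto_measure_Iic_atTop μ
        rw [measure_univ] at h
        have h2 := (ENNReal.tendsto_toReal (by simp : (1 : ℝ≥0∞) ≠ ∞)).comp h
        exact h2
      obtain ⟨y, hy⟩ := (h1.eventually (eventually_ge_nhds ht1)).exists
      exact ⟨y, hy⟩
    have hAbdd : BddBelow A := by
      obtain ⟨y0, hy0⟩ : ∃ y0 : ℝ, F y0 < t := by
        have hInter : ⋂ n : ℕ, Iic (-(n : ℝ)) = ∅ := by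
          ext x
          simp only [mem_iInter, mem_Iic, mem_empty_iff_false, iff_false, not_forall, not_le]
          obtain ⟨n, hn⟩ := exists_nat_gt (-x)
          exact ⟨n, by linarith⟩
        have hmono : Antitone (fun n : ℕ => Iic (-(n : ℝ))) := fun a b hab =>
          Iic_subset_Iic.2 (by exact_mod_cast neg_le_neg (by exact_mod_cast hab))
        have htend := hmono.directed_ge.measure_iInter (μ := μ)
          (fun n => measurableSet_Iic.nullMeasurableSet) ⟨0, hFin _⟩
        rw [hInter, measure_empty] at htend
        have hlt : ⨅ n : ℕ, μ (Iic (-(n : ℝ))) < ENNReal.ofReal t := by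
          rw [← htend]; exact ENNReal.ofReal_pos.mpr ht0
        obtain ⟨n, hn⟩ := iInf_lt_iff.mp hlt
        refine ⟨-(n : ℝ), ?_⟩
        have := ENNReal.toReal_mono (by simp) hn.le
        rw [ENNReal.toReal_ofReal ht0.le] at this
        rcases lt_or_eq_of_le this with h | h
        · exact h
        · exfalso
          have : μ (Iic (-(n : ℝ))) = ENNReal.ofReal t := by
            rw [← ENNReal.ofReal_toReal (hFin (Iic (-(n : ℝ)))), h]
          rw [this] at hn; exact lt_irrefl _ hn
      refine ⟨y0, fun y hy => ?_⟩
      by_contra h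
      push_neg at h
      have h2 : F y ≤ F y0 := hFmono h.le
      have h3 : F y < t := lt_of_le_of_lt h2 hy0
      exact absurd hy (by simpa [hA] using h3.not_ge)
    set c := sInf A with hc
    have hlt_c : ∀ y, y < c → F y < t := by
      intro y hy
      by_contra h
      push_neg at h
      exact absurd (csInf_le hAbdd (by simpa [hA] using h)) (not_le.mpr hy)
    have hμIic_c : ENNReal.ofReal t ≤ μ (Iic c) := by
      have hInter : ⋂ n : ℕ, Iic (c + 1 / ((n : ℝ) + 1)) = Iic c := by
        ext x
        simp only [mem_iInter, mem_Iic]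
        constructor
        · intro h
          by_contra hx
          push_neg at hx
          obtain ⟨n, hn⟩ := exists_nat_one_div_lt (sub_pos.mpr hx)
          have := h n
          linarith
        · intro h n
          have : (0 : ℝ) < 1 / ((n : ℝ) + 1) := by positivity
          linarith
      have hmono : Antitone (fun n : ℕ => Iic (c + 1 / ((n : ℝ) + 1))) := by
        intro a b hab
        apply Iic_subset_Iic.2
        have h1 : 1 / ((b : ℝ) + 1) ≤ 1 / ((a : ℝ) + 1) := by
          apply one_div_le_one_div_of_le
          · positivity
          · exact_mod_cast add_le_add_left (Nat.cast_le.mpr hab) 1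
        linarith
      have heq := hmono.directed_ge.measure_iInter (μ := μ)
        (fun n => measurableSet_Iic.nullMeasurableSet) ⟨0, hFin _⟩
      rw [hInter] at heq
      rw [heq]
      refine le_iInf fun n => ?_
      have hpos : (0 : ℝ) < 1 / ((n : ℝ) + 1) := by positivity
      obtain ⟨y, hyA, hylt⟩ := (csInf_lt_iff hAbdd hAne).mp
        (show sInf A < c + 1 / ((n : ℝ) + 1) by rw [← hc]; linarith)
      calc ENNReal.ofReal t ≤ μ (Iic y) := ENNReal.ofReal_le_of_le_toReal hyA
        _ ≤ μ (Iic (c + 1 / ((n : ℝ) + 1))) := measure_mono (Iic_subset_Iic.2 hylt.le)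
    have htFc : t ≤ F c := by
      have h := ENNReal.toReal_mono (hFin (Iic c)) hμIic_c
      rwa [ENNReal.toReal_ofReal ht0.le] at h
    have hμIio_c : μ (Iio c) ≤ ENNReal.ofReal t := by
      have hUnion : ⋃ n : ℕ, Iic (c - 1 / ((n : ℝ) + 1)) = Iio c := by
        ext x
        simp only [mem_iUnion, mem_Iic, mem_Iio]
        constructor
        · rintro ⟨n, hn⟩
          have : (0 : ℝ) < 1 / ((n : ℝ) + 1) := by positivity
          linarith
        · intro h
          obtain ⟨n, hn⟩ := exists_nat_one_div_lt (sub_pos.mpr h)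
          exact ⟨n, by linarith⟩
      have hmono : Monotone (fun n : ℕ => Iic (c - 1 / ((n : ℝ) + 1))) := by
        intro a b hab
        apply Iic_subset_Iic.2
        have h1 : 1 / ((b : ℝ) + 1) ≤ 1 / ((a : ℝ) + 1) := by
          apply one_div_le_one_div_of_le
          · positivity
          · exact_mod_cast add_le_add_left (Nat.cast_le.mpr hab) 1
        linarith
      rw [← hUnion, hmono.measure_iUnion]
      refine iSup_le fun n => ?_
      have hpos : (0 : ℝ) < 1 / ((n : ℝ) + 1) := by positivity
      have hlt : c - 1 / ((n : ℝ) + 1) < c := by linarith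
      have hle := (hlt_c _ hlt).le
      exact (ENNReal.le_ofReal_iff_toReal_le (hFin _) ht0.le).mpr hle
    have hFm_c : (μ (Iio c)).toReal ≤ t := by
      have h := ENNReal.toReal_mono (by simp : ENNReal.ofReal t ≠ ∞) hμIio_c
      rwa [ENNReal.toReal_ofReal ht0.le] at h
    set g : ℝ → ℝ≥0∞ :=
      fun y => ENNReal.ofReal (hfun t (μ (Iio y)).toReal (μ {y}).toReal) with hg
    have hsplit : ∫⁻ y, g y ∂μ
        = (∫⁻ y in Iio c, g y ∂μ + ∫⁻ y in {c}, g y ∂μ) + ∫⁻ y in Ioi c, g y ∂μ := by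
      have h1 := (lintegral_add_compl g (measurableSet_Iic (a := c)) (μ := μ)).symm
      rw [compl_Iic] at h1
      have h2 : ∫⁻ y in Iic c, g y ∂μ = ∫⁻ y in Iio c, g y ∂μ + ∫⁻ y in {c}, g y ∂μ := by
        rw [← lintegral_union (measurableSet_singleton c) (by simp), Iio_union_right]
      rw [h1, h2]
    have hIio_part : ∫⁻ y in Iio c, g y ∂μ = μ (Iio c) := by
      have hval : ∀ᵐ y ∂μ, y ∈ Iio c → g y = 1 := by
        refine Filter.Eventually.of_forall fun y hy => ?_
        have hFy : F y < t := hlt_c y hy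
        have hFmy : (μ (Iio y)).toReal ≤ F y :=
          ENNReal.toReal_mono (hFin _) (measure_mono Iio_subset_Iic_self)
        simp only [hg]
        unfold hfun
        by_cases hb : (μ {y}).toReal = 0
        · rw [if_pos hb, if_pos (by linarith)]
          exact ENNReal.ofReal_one
        · rw [if_neg hb]
          have hbpos : 0 < (μ {y}).toReal :=
            lt_of_le_of_ne ENNReal.toReal_nonneg (Ne.symm hb)
          have hsum : (μ (Iio y)).toReal + (μ {y}).toReal = F y := (htoR y).symm
          have h1le : (1 : ℝ) ≤ (t - (μ (Iio y)).toReal) / (μ {y}).toReal := by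
            rw [le_div_iff₀ hbpos]; linarith
          rw [min_eq_left (h1le.trans (le_max_right 0 _)), ENNReal.ofReal_one]
      calc ∫⁻ y in Iio c, g y ∂μ = ∫⁻ _ in Iio c, 1 ∂μ :=
            setLIntegral_congr_fun_ae measurableSet_Iio hval
        _ = μ (Iio c) := setLIntegral_one _
    have hIoi_part : ∫⁻ y in Ioi c, g y ∂μ = 0 := by
      set N := {y : ℝ | c < y ∧ μ (Ioc c y) = 0} with hN
      have hNnull : μ N = 0 := by
        apply null_of
        intro y hy
        refine measure_mono_null ?_ hy.2
        rintro z ⟨hz1, hz2⟩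
        exact ⟨hz1.1, hz2⟩
      have hval : ∀ᵐ y ∂μ, y ∈ Ioi c → g y = 0 := by
        filter_upwards [measure_eq_zero_iff_ae_notMem.mp hNnull] with y hyN hy
        have hIocne : μ (Ioc c y) ≠ 0 := fun h => hyN ⟨hy, h⟩
        have hsubset : Iic c ⊆ Iio y := fun z hz => Set.mem_Iio.2 (lt_of_le_of_lt hz hy)
        have hFmge : t ≤ (μ (Iio y)).toReal :=
          le_trans htFc (ENNReal.toReal_mono (hFin _) (measure_mono hsubset))
        simp only [hg]
        unfold hfun
        by_cases hb : (μ {y}).toReal = 0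
        · rw [if_pos hb]
          have hne : ¬ (μ (Iio y)).toReal ≤ t := by
            intro hle
            have heq : (μ (Iio y)).toReal = t := le_antisymm hle hFmge
            have hIioy : μ (Iio y) = ENNReal.ofReal t := by
              rw [← ENNReal.ofReal_toReal (hFin (Iio y)), heq]
            have hIicy : μ (Iic y) = ENNReal.ofReal t := by
              rw [hIicU y, hsing_zero y hb, add_zero, hIioy]
            have hIicc : μ (Iic c) = ENNReal.ofReal t := by
              refine le_antisymm ?_ hμIic_c
              calc μ (Iic c) ≤ μ (Iio y) := measure_mono hsubset
                _ = ENNReal.ofReal t := hIioy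
            have hzero : μ (Ioc c y) = 0 := by
              have hdiff : μ (Ioc c y) = μ (Iic y) - μ (Iic c) := by
                rw [← Iic_sdiff_Iic,
                  measure_diff (Iic_subset_Iic.2 hy.le) measurableSet_Iic.nullMeasurableSet
                    (hFin _)]
              rw [hdiff, hIicy, hIicc, tsub_self]
            exact hIocne hzero
          rw [if_neg hne, ENNReal.ofReal_zero]
        · rw [if_neg hb]
          have hbpos : 0 < (μ {y}).toReal :=
            lt_of_le_of_ne ENNReal.toReal_nonneg (Ne.symm hb)
          have hnum : t - (μ (Iio y)).toReal ≤ 0 := by linarith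
          have hdiv : (t - (μ (Iio y)).toReal) / (μ {y}).toReal ≤ 0 :=
            div_nonpos_of_nonpos_of_nonneg hnum hbpos.le
          rw [max_eq_left hdiv, min_eq_right zero_le_one, ENNReal.ofReal_zero]
      calc ∫⁻ y in Ioi c, g y ∂μ = ∫⁻ _ in Ioi c, 0 ∂μ :=
            setLIntegral_congr_fun_ae measurableSet_Ioi hval
        _ = 0 := by simp
    have hc_part : ∫⁻ y in {c}, g y ∂μ = μ {c} * g c := by
      rw [Measure.restrict_singleton, lintegral_smul_measure, lintegral_dirac, smul_eq_mul]
    rw [hsplit, hIio_part, hc_part, hIoi_part, add_zero, min_eq_left ht1.le]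
    by_cases hb : (μ {c}).toReal = 0
    · have hsg : μ {c} = 0 := hsing_zero c hb
      have hiq : μ (Iic c) = μ (Iio c) := by rw [hIicU c, hsg, add_zero]
      have hFceq : (μ (Iio c)).toReal = t := by
        refine le_antisymm hFm_c ?_
        have : F c = (μ (Iio c)).toReal := by simp only [hF]; rw [hiq]
        linarith [htFc, this]
      rw [hsg, zero_mul, add_zero, ← ENNReal.ofReal_toReal (hFin (Iio c)), hFceq]
    · have hbpos : 0 < (μ {c}).toReal :=
        lt_of_le_of_ne ENNReal.toReal_nonneg (Ne.symm hb)
      have hsum : (μ (Iio c)).toReal + (μ {c}).toReal = F c := (htoR c).symm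
      have hgc : g c = ENNReal.ofReal ((t - (μ (Iio c)).toReal) / (μ {c}).toReal) := by
        simp only [hg]
        unfold hfun
        rw [if_neg hb]
        have h0le : 0 ≤ (t - (μ (Iio c)).toReal) / (μ {c}).toReal :=
          div_nonneg (by linarith) hbpos.le
        have hle1 : (t - (μ (Iio c)).toReal) / (μ {c}).toReal ≤ 1 := by
          rw [div_le_one hbpos]; linarith
        rw [max_eq_right h0le, min_eq_right hle1]
      have hμc : μ {c} = ENNReal.ofReal ((μ {c}).toReal) :=
        (ENNReal.ofReal_toReal (hFin {c})).symm
      have hμio : μ (Iio c) = ENNReal.ofReal ((μ (Iio c)).toReal) :=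
        (ENNReal.ofReal_toReal (hFin (Iio c))).symm
      have hkey : μ {c} * g c = ENNReal.ofReal (t - (μ (Iio c)).toReal) := by
        rw [hgc]
        nth_rewrite 1 [hμc]
        rw [← ENNReal.ofReal_mul ENNReal.toReal_nonneg]
        congr 1
        field_simp
      rw [hkey]
      nth_rewrite 1 [hμio]
      rw [← ENNReal.ofReal_add ENNReal.toReal_nonneg (by linarith)]
      congr 1
      ring

/-! ### Kernel helpers -/

section Kernels

variable {Ω : Type*} [mΩ : MeasurableSpace Ω]

noncomputable def ker (κ : Ω → Measure ℝ)
    (hκmeas : ∀ B : Set ℝ, MeasurableSet B → Measurable fun ω => κ ω B) :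
    Kernel Ω ℝ :=
  { toFun := κ
    measurable' := Measure.measurable_of_measurable_coe κ hκmeas }

lemma ker_apply (κ : Ω → Measure ℝ)
    (hκmeas : ∀ B : Set ℝ, MeasurableSet B → Measurable fun ω => κ ω B) (ω : Ω) :
    ker κ hκmeas ω = κ ω := rfl

lemma ker_markov (κ : Ω → Measure ℝ) (hκprob : ∀ ω, IsProbabilityMeasure (κ ω))
    (hκmeas : ∀ B : Set ℝ, MeasurableSet B → Measurable fun ω => κ ω B) :
    IsMarkovKernel (ker κ hκmeas) :=
  ⟨fun ω => hκprob ω⟩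

lemma meas_slice (κ : Ω → Measure ℝ) (hκprob : ∀ ω, IsProbabilityMeasure (κ ω))
    (hκmeas : ∀ B : Set ℝ, MeasurableSet B → Measurable fun ω => κ ω B)
    {S : Set (Ω × ℝ)} (hS : MeasurableSet S) :
    Measurable fun ω => κ ω (Prod.mk ω ⁻¹' S) := by
  haveI := ker_markov κ hκprob hκmeas
  exact Kernel.measurable_kernel_prodMk_left (κ := ker κ hκmeas) hS

lemma meas_lint (κ : Ω → Measure ℝ) (hκprob : ∀ ω, IsProbabilityMeasure (κ ω))
    (hκmeas : ∀ B : Set ℝ, MeasurableSet B → Measurable fun ω => κ ω B)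
    {g : Ω × ℝ → ℝ≥0∞} (hg : Measurable g) :
    Measurable fun ω => ∫⁻ y, g (ω, y) ∂(κ ω) := by
  haveI := ker_markov κ hκprob hκmeas
  exact hg.lintegral_kernel_prod_right' (κ := ker κ hκmeas)

lemma meas_joint (κ : Ω → Measure ℝ) (hκprob : ∀ ω, IsProbabilityMeasure (κ ω))
    (hκmeas : ∀ B : Set ℝ, MeasurableSet B → Measurable fun ω => κ ω B)
    {t : Set ((Ω × ℝ) × ℝ)} (ht : MeasurableSet t) :
    Measurable fun p : Ω × ℝ => κ p.1 {z | (p, z) ∈ t} := by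
  have h := meas_slice (fun p : Ω × ℝ => κ p.1) (fun p => hκprob p.1)
    (fun B hB => (hκmeas B hB).comp measurable_fst) ht
  exact h

lemma meas_joint_Iio (κ : Ω → Measure ℝ) (hκprob : ∀ ω, IsProbabilityMeasure (κ ω))
    (hκmeas : ∀ B : Set ℝ, MeasurableSet B → Measurable fun ω => κ ω B) :
    Measurable fun p : Ω × ℝ => κ p.1 (Iio p.2) :=
  meas_joint κ hκprob hκmeas
    (measurableSet_lt (measurable_snd : Measurable fun p : (Ω × ℝ) × ℝ => p.2)
      (measurable_fst.snd : Measurable fun p : (Ω × ℝ) × ℝ => p.1.2))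

lemma meas_joint_singleton (κ : Ω → Measure ℝ) (hκprob : ∀ ω, IsProbabilityMeasure (κ ω))
    (hκmeas : ∀ B : Set ℝ, MeasurableSet B → Measurable fun ω => κ ω B) :
    Measurable fun p : Ω × ℝ => κ p.1 {p.2} := by
  have ht : MeasurableSet {q : (Ω × ℝ) × ℝ | q.2 = q.1.2} :=
    measurableSet_eq_fun (measurable_snd : Measurable fun q : (Ω × ℝ) × ℝ => q.2)
      (measurable_fst.snd : Measurable fun q : (Ω × ℝ) × ℝ => q.1.2)
  exact meas_joint κ hκprob hκmeas ht

end Kernels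

/-! ### Disintegration of `Q ∘ (id, Y)⁻¹` via the regular conditional distribution -/

lemma disint {Ω : Type*} {m0 : MeasurableSpace Ω} [m : MeasurableSpace Ω]
    (hm0 : m0 ≤ m) (Q : Measure Ω) [IsProbabilityMeasure Q]
    {Y : Ω → ℝ} (hY : Measurable Y)
    (κ : Ω → Measure ℝ) (hκprob : ∀ ω, IsProbabilityMeasure (κ ω))
    (hκmeas : ∀ B : Set ℝ, MeasurableSet B → Measurable[m0] fun ω => κ ω B)
    (hbasic : ∀ A : Set Ω, MeasurableSet[m0] A → ∀ B : Set ℝ, MeasurableSet B →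
      Q (A ∩ Y ⁻¹' B) = ∫⁻ ω in A, κ ω B ∂Q)
    {g : Ω × ℝ → ℝ≥0∞} (hg : Measurable[m0.prod Real.measurableSpace] g) :
    ∫⁻ ω, g (ω, Y ω) ∂Q = ∫⁻ ω, ∫⁻ y, g (ω, y) ∂(κ ω) ∂Q := by
  have hT : @Measurable Ω (Ω × ℝ) m (m0.prod Real.measurableSpace) (fun ω => (ω, Y ω)) := by
    have h1 : @Measurable Ω Ω m m0 id := measurable_id.mono hm0 le_rfl
    exact Measurable.prodMk h1 hY
  -- set-level identity
  have hset : ∀ S : Set (Ω × ℝ), MeasurableSet[m0.prod Real.measurableSpace] S →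
      Q ((fun ω => (ω, Y ω)) ⁻¹' S) = ∫⁻ ω, κ ω (Prod.mk ω ⁻¹' S) ∂Q := by
    have hgen : (m0.prod Real.measurableSpace) = MeasurableSpace.generateFrom
        (image2 (· ×ˢ ·) {s : Set Ω | MeasurableSet[m0] s} {t : Set ℝ | MeasurableSet t}) :=
      (@generateFrom_prod Ω ℝ m0 Real.measurableSpace).symm
    refine @MeasurableSpace.induction_on_inter (Ω × ℝ) (m0.prod Real.measurableSpace)
      (fun S _ => Q ((fun ω => (ω, Y ω)) ⁻¹' S) = ∫⁻ ω, κ ω (Prod.mk ω ⁻¹' S) ∂Q)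
      _ hgen (@isPiSystem_prod Ω ℝ m0 Real.measurableSpace)
      ?_ ?_ ?_ ?_
    · simp
    · rintro S ⟨A, hA, B, hB, rfl⟩
      simp only [mem_setOf_eq] at hA hB
      have hpre : (fun ω => (ω, Y ω)) ⁻¹' (A ×ˢ B) = A ∩ Y ⁻¹' B := by
        ext ω; simp [Set.mem_prod]
      have hslice : ∀ ω, κ ω (Prod.mk ω ⁻¹' (A ×ˢ B))
          = A.indicator (fun ω => κ ω B) ω := by
        intro ω
        by_cases hω : ω ∈ A
        · have : Prod.mk ω ⁻¹' (A ×ˢ B) = B := by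
            ext z; simp [Set.mem_prod, hω]
          rw [this, indicator_of_mem hω]
        · have : Prod.mk ω ⁻¹' (A ×ˢ B) = ∅ := by
            ext z; simp [Set.mem_prod, hω]
          rw [this, indicator_of_notMem hω]
          simp
      rw [hpre, hbasic A hA B hB]
      rw [lintegral_congr hslice, lintegral_indicator (hm0 A hA)]
    · intro S hS hIH
      have hfin1 : Q ((fun ω => (ω, Y ω)) ⁻¹' S) ≠ ∞ := measure_ne_top _ _
      have hslice_meas : Measurable fun ω => κ ω (Prod.mk ω ⁻¹' S) :=
        (meas_slice (mΩ := m0) κ hκprob hκmeas hS).mono hm0 le_rfl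
      have hslice_le : ∀ ω, κ ω (Prod.mk ω ⁻¹' S) ≤ 1 := fun ω => by
        haveI := hκprob ω; exact prob_le_one
      have hint_le : ∫⁻ ω, κ ω (Prod.mk ω ⁻¹' S) ∂Q ≠ ∞ := by
        refine ne_top_of_le_ne_top (by simp : (1 : ℝ≥0∞) ≠ ∞) ?_
        calc ∫⁻ ω, κ ω (Prod.mk ω ⁻¹' S) ∂Q ≤ ∫⁻ _, 1 ∂Q :=
              lintegral_mono fun ω => hslice_le ω
          _ = 1 := by simp
      have hcompl_slice : ∀ ω, κ ω (Prod.mk ω ⁻¹' Sᶜ) = 1 - κ ω (Prod.mk ω ⁻¹' S) := by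
        intro ω
        haveI := hκprob ω
        have : Prod.mk ω ⁻¹' Sᶜ = (Prod.mk ω ⁻¹' S)ᶜ := rfl
        rw [this, measure_compl (measurable_prodMk_left hS) (measure_ne_top _ _),
          measure_univ]
      have hpre : (fun ω => (ω, Y ω)) ⁻¹' Sᶜ = ((fun ω => (ω, Y ω)) ⁻¹' S)ᶜ := rfl
      rw [hpre, measure_compl (hT hS) hfin1, measure_univ]
      rw [lintegral_congr hcompl_slice]
      rw [lintegral_sub hslice_meas hint_le
        (Filter.Eventually.of_forall fun ω => hslice_le ω)]
      rw [lintegral_one, measure_univ, hIH]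
    · intro f hdisj hfmeas hIH
      have hpre : (fun ω => (ω, Y ω)) ⁻¹' (⋃ i, f i) = ⋃ i, (fun ω => (ω, Y ω)) ⁻¹' f i :=
        preimage_iUnion
      rw [hpre, measure_iUnion (fun i j hij => (hdisj hij).preimage _)
        (fun i => hT (hfmeas i))]
      have hslice : ∀ ω, κ ω (Prod.mk ω ⁻¹' ⋃ i, f i) = ∑' i, κ ω (Prod.mk ω ⁻¹' f i) := by
        intro ω
        rw [preimage_iUnion]
        exact measure_iUnion (fun i j hij => (hdisj hij).preimage _)
          (fun i => measurable_prodMk_left (hfmeas i))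
      rw [lintegral_congr hslice,
        lintegral_tsum fun i =>
          ((meas_slice (mΩ := m0) κ hκprob hκmeas (hfmeas i)).mono hm0 le_rfl).aemeasurable]
      exact tsum_congr fun i => hIH i
  -- function-level identity by induction
  refine @Measurable.ennreal_induction (Ω × ℝ) (m0.prod Real.measurableSpace)
    (fun g => ∫⁻ ω, g (ω, Y ω) ∂Q = ∫⁻ ω, ∫⁻ y, g (ω, y) ∂(κ ω) ∂Q) ?_ ?_ ?_ g hg
  · intro cst S hS
    have h1 : (fun ω => S.indicator (fun _ => cst) (ω, Y ω))
        = ((fun ω => (ω, Y ω)) ⁻¹' S).indicator fun _ => cst := by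
      funext ω
      by_cases hω : (ω, Y ω) ∈ S <;> simp [Set.indicator_apply, hω]
    have h2 : ∀ ω, ∫⁻ y, S.indicator (fun _ => cst) (ω, y) ∂(κ ω)
        = cst * κ ω (Prod.mk ω ⁻¹' S) := by
      intro ω
      have : (fun y => S.indicator (fun _ => cst) (ω, y))
          = (Prod.mk ω ⁻¹' S).indicator fun _ => cst := by
        funext y
        by_cases hy : (ω, y) ∈ S <;> simp [Set.indicator_apply, hy]
      rw [this, lintegral_indicator_const (measurable_prodMk_left hS)]
    rw [h1, lintegral_indicator_const (hT hS), lintegral_congr h2,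
      lintegral_const_mul cst ((meas_slice (mΩ := m0) κ hκprob hκmeas hS).mono hm0 le_rfl),
      hset S hS]
  · intro f₁ f₂ _ hf₁ hf₂ hIH₁ hIH₂
    have hg1 : Measurable fun ω => f₁ (ω, Y ω) := hf₁.comp hT
    have hin1 : Measurable fun ω => ∫⁻ y, f₁ (ω, y) ∂(κ ω) :=
      (meas_lint (mΩ := m0) κ hκprob hκmeas hf₁).mono hm0 le_rfl
    have hadd1 : ∫⁻ ω, (f₁ + f₂) (ω, Y ω) ∂Q
        = ∫⁻ ω, f₁ (ω, Y ω) ∂Q + ∫⁻ ω, f₂ (ω, Y ω) ∂Q := by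
      have : (fun ω => (f₁ + f₂) (ω, Y ω))
          = fun ω => f₁ (ω, Y ω) + f₂ (ω, Y ω) := rfl
      rw [this, lintegral_add_left hg1]
    have hadd2 : ∀ ω, ∫⁻ y, (f₁ + f₂) (ω, y) ∂(κ ω)
        = ∫⁻ y, f₁ (ω, y) ∂(κ ω) + ∫⁻ y, f₂ (ω, y) ∂(κ ω) := by
      intro ω
      have heq : (fun y => (f₁ + f₂) (ω, y)) = fun y => f₁ (ω, y) + f₂ (ω, y) := rfl
      have hm1 : Measurable fun y => f₁ (ω, y) :=
        hf₁.comp (@measurable_prodMk_left Ω ℝ m0 _ ω)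
      rw [heq, lintegral_add_left hm1]
    rw [hadd1, hIH₁, hIH₂, lintegral_congr hadd2, lintegral_add_left hin1]
  · intro f hfmeas hfmono hIH
    show ∫⁻ ω, ⨆ n, f n (ω, Y ω) ∂Q = ∫⁻ ω, ∫⁻ y, ⨆ n, f n (ω, y) ∂(κ ω) ∂Q
    have h2 : ∀ ω, ∫⁻ y, ⨆ n, f n (ω, y) ∂(κ ω)
        = ⨆ n, ∫⁻ y, f n (ω, y) ∂(κ ω) := by
      intro ω
      exact lintegral_iSup
        (fun n => (hfmeas n).comp (@measurable_prodMk_left Ω ℝ m0 _ ω))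
        (fun i j hij y => hfmono hij (ω, y))
    have hm3 : ∀ n, Measurable fun ω => f n (ω, Y ω) := fun n => (hfmeas n).comp hT
    rw [lintegral_iSup hm3 (fun i j hij ω => hfmono hij (ω, Y ω))]
    rw [lintegral_congr h2, lintegral_iSup
      (fun n => (meas_lint (mΩ := m0) κ hκprob hκmeas (hfmeas n)).mono hm0 le_rfl)
      (fun i j hij ω => lintegral_mono fun y => hfmono hij (ω, y))]
    exact iSup_congr hIH

end IdealForecastAux

/-- **Theorem 1 of Gneiting–Ranjan.** An ideal forecast — the regular
conditional distribution `κ` of the observation `Y` given a sub-σ-algebra `m0 = 𝒜₀` — is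
(a) marginally calibrated: `E_Q[κ_·((−∞, y])] = Q(Y ≤ y)` for every `y`, and
(b) probabilistically calibrated: its randomized probability integral transform
`Z = κ_·((−∞, Y)) + V·κ_·({Y})`, with `V` uniform on `[0,1]` independent of
`σ(𝒜₀, Y)`, is uniformly distributed on `[0,1]`. -/
theorem ideal_forecast_marginally_and_probabilistically_calibrated
    {Ω : Type*} (m0 : MeasurableSpace Ω) [m : MeasurableSpace Ω] [StandardBorelSpace Ω]
    (Q : Measure Ω) [IsProbabilityMeasure Q]
    (hm0 : m0 ≤ m)
    (Y V : Ω → ℝ) (hYmeas : Measurable Y) (hVmeas : Measurable V)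
    (hVunif : Q.map V = volume.restrict (Set.Icc (0 : ℝ) 1))
    (hindep : Indep (MeasurableSpace.comap V Real.measurableSpace)
      (m0 ⊔ MeasurableSpace.comap Y Real.measurableSpace) Q)
    (κ : Ω → Measure ℝ) (hκprob : ∀ ω, IsProbabilityMeasure (κ ω))
    (hκmeas : ∀ B : Set ℝ, MeasurableSet B → Measurable[m0] fun ω => κ ω B)
    (hκcond : ∀ B : Set ℝ, MeasurableSet B →
      (fun ω => (κ ω B).toReal) =ᵐ[Q]
        Q[Set.indicator (Y ⁻¹' B) (fun _ => (1 : ℝ)) | m0]) :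
    (∀ y : ℝ, ∫ ω, (κ ω (Set.Iic y)).toReal ∂Q = (Q {ω | Y ω ≤ y}).toReal) ∧
      Q.map (fun ω => (κ ω (Set.Iio (Y ω))).toReal + V ω * (κ ω {Y ω}).toReal) =
        volume.restrict (Set.Icc (0 : ℝ) 1) := by
  classical
  open IdealForecastAux in
  -- Part (a): marginal calibration
  have parta : ∀ y : ℝ, ∫ ω, (κ ω (Set.Iic y)).toReal ∂Q = (Q {ω | Y ω ≤ y}).toReal := by
    intro y
    have hB := hκcond (Set.Iic y) measurableSet_Iic
    have hint : Integrable (Set.indicator (Y ⁻¹' Set.Iic y) (fun _ => (1 : ℝ))) Q :=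
      (integrable_const (1 : ℝ)).indicator (hYmeas measurableSet_Iic)
    calc ∫ ω, (κ ω (Set.Iic y)).toReal ∂Q
        = ∫ ω, (Q[Set.indicator (Y ⁻¹' Set.Iic y) (fun _ => (1 : ℝ)) | m0]) ω ∂Q :=
          integral_congr_ae hB
      _ = ∫ ω, Set.indicator (Y ⁻¹' Set.Iic y) (fun _ => (1 : ℝ)) ω ∂Q :=
          integral_condExp hm0
      _ = (Q (Y ⁻¹' Set.Iic y)).toReal := by
          rw [integral_indicator_const (1 : ℝ) (hYmeas measurableSet_Iic)]
          simp [Measure.real]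
      _ = (Q {ω | Y ω ≤ y}).toReal := rfl
  refine ⟨parta, ?_⟩
  -- basic disintegration identity
  have hbasic : ∀ A : Set Ω, MeasurableSet[m0] A → ∀ B : Set ℝ, MeasurableSet B →
      Q (A ∩ Y ⁻¹' B) = ∫⁻ ω in A, κ ω B ∂Q := by
    intro A hA B hB
    have hAm : MeasurableSet A := hm0 A hA
    have hint : Integrable (Set.indicator (Y ⁻¹' B) (fun _ => (1 : ℝ))) Q :=
      (integrable_const (1 : ℝ)).indicator (hYmeas hB)
    have hreal : ∫ ω in A, (κ ω B).toReal ∂Q = (Q (A ∩ Y ⁻¹' B)).toReal := by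
      calc ∫ ω in A, (κ ω B).toReal ∂Q
          = ∫ ω in A, (Q[Set.indicator (Y ⁻¹' B) (fun _ => (1 : ℝ)) | m0]) ω ∂Q := by
            refine setIntegral_congr_ae hAm ?_
            filter_upwards [hκcond B hB] with ω hω _ using hω
        _ = ∫ ω in A, Set.indicator (Y ⁻¹' B) (fun _ => (1 : ℝ)) ω ∂Q :=
            setIntegral_condExp hm0 hint hA
        _ = (Q (Y ⁻¹' B ∩ A)).toReal := by
            rw [integral_indicator_const (1 : ℝ) (hYmeas hB)]
            simp [Measure.real, Measure.restrict_apply (hYmeas hB)]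
        _ = (Q (A ∩ Y ⁻¹' B)).toReal := by rw [Set.inter_comm]
    have hmeasκ : Measurable fun ω => κ ω B := (hκmeas B hB).mono hm0 le_rfl
    have hfin : ∫⁻ ω in A, κ ω B ∂Q ≠ ∞ := by
      refine ne_top_of_le_ne_top (measure_ne_top Q A) ?_
      calc ∫⁻ ω in A, κ ω B ∂Q ≤ ∫⁻ _ in A, 1 ∂Q := by
            refine lintegral_mono fun ω => ?_
            haveI := hκprob ω; exact prob_le_one
        _ = Q A := setLIntegral_one A
    have htoreal : (∫⁻ ω in A, κ ω B ∂Q).toReal = ∫ ω in A, (κ ω B).toReal ∂Q := by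
      rw [integral_toReal (hmeasκ.aemeasurable.restrict)
        (Filter.Eventually.of_forall fun ω => by
          haveI := hκprob ω; exact lt_of_le_of_lt prob_le_one (by norm_num))]
    have := hreal
    rw [← htoreal] at this
    exact ((ENNReal.toReal_eq_toReal_iff' (measure_ne_top Q _) hfin).mp this.symm)
  -- measurability infrastructure
  have hm' : m0 ⊔ MeasurableSpace.comap Y Real.measurableSpace ≤ m :=
    sup_le hm0 hYmeas.comap_le
  have hjIio : Measurable[m0.prod Real.measurableSpace]
      fun p : Ω × ℝ => κ p.1 (Set.Iio p.2) :=
    meas_joint_Iio (mΩ := m0) κ hκprob hκmeas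
  have hjsing : Measurable[m0.prod Real.measurableSpace]
      fun p : Ω × ℝ => κ p.1 {p.2} :=
    meas_joint_singleton (mΩ := m0) κ hκprob hκmeas
  have hT' : @Measurable Ω (Ω × ℝ) (m0 ⊔ MeasurableSpace.comap Y Real.measurableSpace)
      (m0.prod Real.measurableSpace) (fun ω => (ω, Y ω)) := by
    have h1 : @Measurable Ω Ω (m0 ⊔ MeasurableSpace.comap Y Real.measurableSpace) m0 id :=
      measurable_id.mono le_sup_left le_rfl
    have h2 : @Measurable Ω ℝ (m0 ⊔ MeasurableSpace.comap Y Real.measurableSpace)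
        Real.measurableSpace Y := Measurable.of_comap_le le_sup_right
    exact Measurable.prodMk h1 h2
  set W : Ω → ℝ × ℝ :=
    fun ω => ((κ ω (Set.Iio (Y ω))).toReal, (κ ω {Y ω}).toReal) with hWdef
  have hWm' : @Measurable Ω (ℝ × ℝ) (m0 ⊔ MeasurableSpace.comap Y Real.measurableSpace) _ W := by
    refine Measurable.prodMk ?_ ?_
    · exact (ENNReal.measurable_toReal.comp hjIio).comp hT'
    · exact (ENNReal.measurable_toReal.comp hjsing).comp hT'
  have hWm : Measurable W := hWm'.mono hm' le_rfl
  have hZmeas : Measurable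
      fun ω => (κ ω (Set.Iio (Y ω))).toReal + V ω * (κ ω {Y ω}).toReal :=
    (hWm.fst).add (hVmeas.mul hWm.snd)
  -- independence
  have hWV : IndepFun W V Q := by
    rw [IndepFun_iff_Indep]
    have hle : MeasurableSpace.comap W Prod.instMeasurableSpace
        ≤ m0 ⊔ MeasurableSpace.comap Y Real.measurableSpace := hWm'.comap_le
    have h := hindep.symm
    rw [Indep_iff] at h ⊢
    intro t1 t2 ht1 ht2
    exact h t1 t2 (hle _ ht1) ht2
  have hmap : Q.map (fun ω => (W ω, V ω)) = (Q.map W).prod (Q.map V) :=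
    (indepFun_iff_map_prod_eq_prod_map_map hWm.aemeasurable hVmeas.aemeasurable).mp hWV
  -- prove equality of measures via Iic sets
  refine Measure.ext_of_Iic _ _ fun t => ?_
  have hRHS : (volume.restrict (Set.Icc (0:ℝ) 1)) (Set.Iic t) = ENNReal.ofReal (min t 1) := by
    rw [Measure.restrict_apply' measurableSet_Icc]
    have : Set.Iic t ∩ Set.Icc (0:ℝ) 1 = Set.Icc 0 (min t 1) := by
      ext v
      simp only [Set.mem_inter_iff, Set.mem_Iic, Set.mem_Icc, le_min_iff]
      tauto
    rw [this, Real.volume_Icc, sub_zero]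
  rw [hRHS]
  rw [Measure.map_apply hZmeas measurableSet_Iic]
  set S : Set ((ℝ × ℝ) × ℝ) := {p | p.1.1 + p.2 * p.1.2 ≤ t} with hSdef
  have hS : MeasurableSet S :=
    measurableSet_le ((measurable_fst.fst).add (measurable_snd.mul measurable_fst.snd))
      measurable_const
  have hpre : (fun ω => (κ ω (Set.Iio (Y ω))).toReal + V ω * (κ ω {Y ω}).toReal) ⁻¹' Set.Iic t
      = (fun ω => (W ω, V ω)) ⁻¹' S := rfl
  rw [hpre, ← Measure.map_apply (hWm.prodMk hVmeas) hS, hmap, Measure.prod_apply hS, hVunif]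
  have hmeas_int : Measurable fun w : ℝ × ℝ =>
      (volume.restrict (Set.Icc (0:ℝ) 1)) (Prod.mk w ⁻¹' S) :=
    measurable_measure_prodMk_left hS
  rw [lintegral_map hmeas_int hWm]
  have hpoint : ∀ ω, (volume.restrict (Set.Icc (0:ℝ) 1)) (Prod.mk (W ω) ⁻¹' S)
      = ENNReal.ofReal (hfun t (κ ω (Set.Iio (Y ω))).toReal (κ ω {Y ω}).toReal) := by
    intro ω
    have : Prod.mk (W ω) ⁻¹' S
        = {v : ℝ | (κ ω (Set.Iio (Y ω))).toReal + v * (κ ω {Y ω}).toReal ≤ t} := rfl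
    rw [this]
    exact vol_eq t _ _ ENNReal.toReal_nonneg
  rw [lintegral_congr hpoint]
  -- disintegrate
  set gfun : Ω × ℝ → ℝ≥0∞ :=
    fun p => ENNReal.ofReal (hfun t (κ p.1 (Set.Iio p.2)).toReal (κ p.1 {p.2}).toReal)
    with hgdef
  have hgmeas : Measurable[m0.prod Real.measurableSpace] gfun := by
    refine ENNReal.measurable_ofReal.comp ?_
    exact (hfun_measurable t).comp
      (Measurable.prodMk (ENNReal.measurable_toReal.comp hjIio)
        (ENNReal.measurable_toReal.comp hjsing))
  have hdis := disint hm0 Q hYmeas κ hκprob hκmeas hbasic hgmeas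
  have hlhs : ∫⁻ ω, ENNReal.ofReal
      (hfun t (κ ω (Set.Iio (Y ω))).toReal (κ ω {Y ω}).toReal) ∂Q
      = ∫⁻ ω, gfun (ω, Y ω) ∂Q := rfl
  rw [hlhs, hdis]
  have hinner : ∀ ω, ∫⁻ y, gfun (ω, y) ∂(κ ω) = ENNReal.ofReal (min t 1) := by
    intro ω
    haveI := hκprob ω
    exact pit (κ ω) t
  rw [lintegral_congr hinner, lintegral_const, measure_univ, mul_one]
end

section
/- Let ε be a standard normal random variable, let σ > 0, and let Z_σ = Φ(ε/σ), where Φ is the standard normal cumulative distribution function. Then Var(Z_σ) > 1/12 if σ < 1, Var(Z_σ) = 1/12 if σ = 1, and Var(Z_σ) < 1/12 if σ > 1. -/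
open MeasureTheory ProbabilityTheory

open Set Filter

/-- The standard normal cumulative distribution function `Φ`. -/
noncomputable def stdNormalCDF (x : ℝ) : ℝ :=
  (ProbabilityTheory.gaussianReal 0 1 (Set.Iic x)).toReal

namespace StdAux

noncomputable def γ : Measure ℝ := gaussianReal 0 1
noncomputable def φ : ℝ → ℝ := gaussianPDFReal 0 1

instance : IsProbabilityMeasure γ := by unfold γ; infer_instance

lemma phi_pos (x : ℝ) : 0 < φ x := gaussianPDFReal_pos 0 1 x one_ne_zero

lemma phi_cont : Continuous φ := by
  unfold φ gaussianPDFReal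
  fun_prop

lemma phi_integrable : Integrable φ := integrable_gaussianPDFReal 0 1

lemma Phi_eq (x : ℝ) : stdNormalCDF x = ∫ t in Iic x, φ t := by
  rw [stdNormalCDF, show gaussianReal 0 1 (Iic x) = ENNReal.ofReal (∫ t in Iic x, φ t) from
    gaussianReal_apply_eq_integral 0 one_ne_zero _]
  exact ENNReal.toReal_ofReal (setIntegral_nonneg measurableSet_Iic fun t _ => (phi_pos t).le)

lemma Phi_sub (a b : ℝ) : stdNormalCDF b - stdNormalCDF a = ∫ t in a..b, φ t := by
  rw [Phi_eq, Phi_eq, ← intervalIntegral.integral_Iic_sub_Iic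
    phi_integrable.integrableOn phi_integrable.integrableOn]

lemma Phi_hasDerivAt (x : ℝ) : HasDerivAt stdNormalCDF (φ x) x := by
  have h : ∀ y, stdNormalCDF y = stdNormalCDF 0 + ∫ t in (0:ℝ)..y, φ t := by
    intro y
    rw [← Phi_sub 0 y]; ring
  have := intervalIntegral.integral_hasDerivAt_right
    (phi_integrable.intervalIntegrable : IntervalIntegrable φ volume 0 x)
    (phi_cont.stronglyMeasurableAtFilter _ _) phi_cont.continuousAt
  have h2 : HasDerivAt (fun y => stdNormalCDF 0 + ∫ t in (0:ℝ)..y, φ t) (φ x) x :=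
    (this.const_add _)
  exact h2.congr_of_eventuallyEq (Filter.Eventually.of_forall fun y => h y)

lemma Phi_cont : Continuous stdNormalCDF :=
  continuous_iff_continuousAt.2 fun x => (Phi_hasDerivAt x).continuousAt

lemma Phi_strictMono : StrictMono stdNormalCDF := by
  apply strictMono_of_deriv_pos
  intro x
  rw [(Phi_hasDerivAt x).deriv]
  exact phi_pos x

lemma Phi_nonneg (x : ℝ) : 0 ≤ stdNormalCDF x := ENNReal.toReal_nonneg

lemma Phi_le_one (x : ℝ) : stdNormalCDF x ≤ 1 := by
  rw [stdNormalCDF]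
  exact ENNReal.toReal_le_of_le_ofReal zero_le_one (by simpa using prob_le_one)

lemma gamma_map_neg : γ.map (fun x => -x) = γ := by
  have := gaussianReal_map_const_mul (μ := 0) (v := 1) (-1)
  simp only [neg_one_mul, mul_zero] at this
  rw [γ, this]
  congr 1
  ext
  norm_num

lemma gamma_singleton (x : ℝ) : γ {x} = 0 :=
  gaussianReal_absolutelyContinuous 0 one_ne_zero (measure_singleton x)

lemma Phi_neg (x : ℝ) : stdNormalCDF (-x) = 1 - stdNormalCDF x := by
  have h1 : γ (Iic (-x)) = γ (Ici x) := by
    conv_lhs => rw [← gamma_map_neg]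
    rw [Measure.map_apply measurable_neg measurableSet_Iic]
    congr 1
    ext y
    simp only [mem_preimage, mem_Iic, mem_Ici, neg_le_neg_iff]
  have h2 : γ (Ici x) = γ (Ioi x) := measure_congr (Ioi_ae_eq_Ici' (gamma_singleton x)).symm
  have h3 : γ (Ioi x) = 1 - γ (Iic x) := by
    rw [← Set.compl_Iic, measure_compl measurableSet_Iic (measure_ne_top _ _), measure_univ]
  rw [stdNormalCDF, stdNormalCDF]
  show (γ (Iic (-x))).toReal = 1 - (γ (Iic x)).toReal
  rw [h1, h2, h3, ENNReal.toReal_sub_of_le prob_le_one ENNReal.one_ne_top]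
  simp

lemma Phi_zero : stdNormalCDF 0 = 1 / 2 := by
  have := Phi_neg 0
  rw [neg_zero] at this
  linarith

lemma Phi_half_lt {x : ℝ} (hx : 0 < x) : 1 / 2 < stdNormalCDF x := by
  rw [← Phi_zero]; exact Phi_strictMono hx

lemma integral_gamma (g : ℝ → ℝ) : ∫ x, g x ∂γ = ∫ x, φ x * g x := by
  have hd : (gaussianPDF 0 1) = fun x => ((φ x).toNNReal : ENNReal) := rfl
  have hmeas : Measurable (fun x => (φ x).toNNReal) := phi_cont.measurable.real_toNNReal
  rw [γ, gaussianReal_of_var_ne_zero 0 one_ne_zero, hd,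
    integral_withDensity_eq_integral_smul hmeas]
  congr 1
  funext x
  rw [NNReal.smul_def, Real.coe_toNNReal _ (phi_pos x).le, smul_eq_mul]

lemma integrable_gamma_of_bdd {f : ℝ → ℝ} (hf : Measurable f) (C : ℝ)
    (hC : ∀ x, |f x| ≤ C) : Integrable f γ :=
  memLp_one_iff_integrable.mp <| MemLp.of_bound hf.aestronglyMeasurable C
    (Filter.Eventually.of_forall hC)

lemma memLp_two_of_bdd {α : Type*} [MeasurableSpace α] (μ : Measure α) [IsFiniteMeasure μ]
    {f : α → ℝ} (hf : AEStronglyMeasurable f μ) (C : ℝ)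
    (hC : ∀ x, |f x| ≤ C) : MemLp f 2 μ :=
  MemLp.of_bound hf C (Filter.Eventually.of_forall hC)

end StdAux

namespace StdAux

lemma Phi_tendsto_atTop : Tendsto stdNormalCDF atTop (nhds 1) := by
  have h : Tendsto (fun x => gaussianReal 0 1 (Iic x)) atTop (nhds (gaussianReal 0 1 univ)) :=
    tendsto_measure_Iic_atTop _
  rw [measure_univ] at h
  have := (ENNReal.tendsto_toReal ENNReal.one_ne_top).comp h
  exact this

lemma Phi_tendsto_atBot : Tendsto stdNormalCDF atBot (nhds 0) := by
  have h : Tendsto (fun x : ℝ => 1 - stdNormalCDF (-x)) atBot (nhds (1 - 1)) :=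
    tendsto_const_nhds.sub (Phi_tendsto_atTop.comp tendsto_neg_atBot_atTop)
  simp only [sub_self] at h
  refine h.congr fun x => ?_
  rw [Phi_neg]; ring

lemma integrable_w : Integrable (fun x => φ x * stdNormalCDF x ^ 2) := by
  apply phi_integrable.mono'
  · exact (phi_cont.mul (Phi_cont.pow 2)).aestronglyMeasurable
  · refine Filter.Eventually.of_forall fun x => ?_
    have h1 := Phi_nonneg x
    have h2 := Phi_le_one x
    have h3 := (phi_pos x).le
    rw [Real.norm_eq_abs, abs_of_nonneg (by positivity)]
    exact mul_le_of_le_one_right h3 (by nlinarith)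

lemma int_Phi_sq : ∫ x, stdNormalCDF x ^ 2 ∂γ = 1 / 3 := by
  rw [integral_gamma]
  have hderiv : ∀ x : ℝ, HasDerivAt (fun y => stdNormalCDF y ^ 3 / 3)
      (φ x * stdNormalCDF x ^ 2) x := by
    intro x
    have := ((Phi_hasDerivAt x).fun_pow 3).div_const 3
    convert this using 1
    all_goals first | rfl | ring
  have hlim1 : Tendsto (fun R : ℝ => ∫ x in (-R)..R, φ x * stdNormalCDF x ^ 2)
      atTop (nhds (∫ x, φ x * stdNormalCDF x ^ 2)) :=
    intervalIntegral_tendsto_integral integrable_w tendsto_neg_atTop_atBot tendsto_id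
  have heq : ∀ R : ℝ, ∫ x in (-R)..R, φ x * stdNormalCDF x ^ 2
      = stdNormalCDF R ^ 3 / 3 - stdNormalCDF (-R) ^ 3 / 3 := by
    intro R
    exact intervalIntegral.integral_eq_sub_of_hasDerivAt (fun x _ => hderiv x)
      ((phi_cont.mul (Phi_cont.pow 2)).intervalIntegrable _ _)
  have hlim2 : Tendsto (fun R : ℝ => stdNormalCDF R ^ 3 / 3 - stdNormalCDF (-R) ^ 3 / 3)
      atTop (nhds (1 / 3)) := by
    have hA : Tendsto (fun R : ℝ => stdNormalCDF R ^ 3 / 3) atTop (nhds (1 / 3)) := by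
      simpa using (Phi_tendsto_atTop.pow 3).div_const 3
    have hB : Tendsto (fun R : ℝ => stdNormalCDF (-R) ^ 3 / 3) atTop (nhds 0) := by
      have := (Phi_tendsto_atBot.comp tendsto_neg_atTop_atBot).pow 3 |>.div_const 3
      simpa [Function.comp] using this
    simpa using hA.sub hB
  rw [show (1:ℝ)/3 = 1/3 - 0 by ring] at hlim2
  simp only [sub_zero] at hlim2
  have := tendsto_nhds_unique (hlim1.congr fun R => (heq R).symm ▸ rfl) hlim2
  · rw [← this]
  
lemma int_comp_neg (g : ℝ → ℝ) (hg : AEStronglyMeasurable g γ) :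
    ∫ x, g (-x) ∂γ = ∫ x, g x ∂γ := by
  conv_rhs => rw [← gamma_map_neg]
  rw [integral_map measurable_neg.aemeasurable]
  rwa [gamma_map_neg]

lemma int_Phi_div {σ : ℝ} (hσ : 0 < σ) : ∫ x, stdNormalCDF (x / σ) ∂γ = 1 / 2 := by
  set g : ℝ → ℝ := fun x => stdNormalCDF (x / σ) with hg
  have hgc : Continuous g := Phi_cont.comp (continuous_id.div_const σ)
  have hgi : Integrable g γ := integrable_gamma_of_bdd hgc.measurable 1
    (fun x => abs_le.2 ⟨by linarith [Phi_nonneg (x/σ)], Phi_le_one _⟩)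
  have h1 : ∫ x, g (-x) ∂γ = ∫ x, g x ∂γ := int_comp_neg g hgc.aestronglyMeasurable
  have h2 : ∀ x, g (-x) = 1 - g x := by
    intro x
    rw [hg]
    simp only [neg_div]
    exact Phi_neg _
  rw [funext h2] at h1
  rw [integral_sub (integrable_const 1) hgi] at h1
  simp only [integral_const, measure_univ, probReal_univ, ENNReal.toReal_one, smul_eq_mul, one_mul] at h1
  linarith

end StdAux

namespace StdAux

lemma gamma_Ioi_pos : 0 < γ (Ioi (0:ℝ)) := by
  rcases eq_or_ne (γ (Ioi (0:ℝ))) 0 with h | h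
  · exfalso
    have hc : γ (Iic (0:ℝ)) = 1 := by
      have := measure_add_measure_compl (μ := γ) (s := Iic (0:ℝ)) measurableSet_Iic
      rw [Set.compl_Iic, h, add_zero, measure_univ] at this
      exact this
    have : stdNormalCDF 0 = 1 := by
      rw [stdNormalCDF]
      show (γ (Iic (0:ℝ))).toReal = 1
      rw [hc, ENNReal.toReal_one]
    rw [Phi_zero] at this
    norm_num at this
  · exact h.bot_lt

/-- The key sign computation. -/
lemma int_h_eq {σ : ℝ} (hσ : 0 < σ) :
    ∫ x, (stdNormalCDF (x / σ) ^ 2 - stdNormalCDF x ^ 2) ∂γ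
      = ∫ x in Ioi (0:ℝ),
          (2 * (stdNormalCDF (x / σ) - stdNormalCDF x)
            * (stdNormalCDF (x / σ) + stdNormalCDF x - 1)) ∂γ := by
  set u : ℝ → ℝ := fun x => stdNormalCDF (x / σ) with hu
  set h : ℝ → ℝ := fun x => u x ^ 2 - stdNormalCDF x ^ 2 with hh
  have huc : Continuous u := Phi_cont.comp (continuous_id.div_const σ)
  have hhc : Continuous h := (huc.pow 2).sub (Phi_cont.pow 2)
  have hhi : Integrable h γ := by
    refine integrable_gamma_of_bdd hhc.measurable 1 fun x => ?_
    have := Phi_nonneg (x / σ); have := Phi_le_one (x / σ)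
    have := Phi_nonneg x; have := Phi_le_one x
    rw [abs_le]
    simp only [hh, hu]
    constructor <;> nlinarith
  -- split the integral
  have hsplit : ∫ x, h x ∂γ = (∫ x in Ioi (0:ℝ), h x ∂γ) + ∫ x in Iic (0:ℝ), h x ∂γ := by
    rw [← integral_add_compl measurableSet_Ioi hhi, Set.compl_Ioi]
  have hIic : ∫ x in Iic (0:ℝ), h x ∂γ = ∫ x in Iio (0:ℝ), h x ∂γ :=
    (setIntegral_congr_set (Iio_ae_eq_Iic' (gamma_singleton 0))).symm
  have hneg : ∫ x in Iio (0:ℝ), h x ∂γ = ∫ x in Ioi (0:ℝ), h (-x) ∂γ := by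
    conv_lhs => rw [← gamma_map_neg]
    rw [setIntegral_map measurableSet_Iio ?_ measurable_neg.aemeasurable]
    · congr 1
      ext y
      simp
    · rw [gamma_map_neg]
      exact hhc.aestronglyMeasurable
  have hkey : ∀ x, h x + h (-x)
      = 2 * (u x - stdNormalCDF x) * (u x + stdNormalCDF x - 1) := by
    intro x
    have h1 : u (-x) = 1 - u x := by
      rw [hu]
      simp only [neg_div]
      exact Phi_neg _
    have h2 : stdNormalCDF (-x) = 1 - stdNormalCDF x := Phi_neg x
    rw [hh]
    simp only [h1, h2]
    ring
  have hint1 : IntegrableOn h (Ioi (0:ℝ)) γ := hhi.integrableOn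
  have hint2 : IntegrableOn (fun x => h (-x)) (Ioi (0:ℝ)) γ := by
    refine (integrable_gamma_of_bdd ?_ 1 fun x => ?_).integrableOn
    · exact (hhc.comp continuous_neg).measurable
    · have := Phi_nonneg (-x / σ); have := Phi_le_one (-x / σ)
      have := Phi_nonneg (-x); have := Phi_le_one (-x)
      rw [abs_le]
      simp only [hh, hu]
      constructor <;> nlinarith
  calc ∫ x, h x ∂γ = (∫ x in Ioi (0:ℝ), h x ∂γ) + ∫ x in Ioi (0:ℝ), h (-x) ∂γ := by
        rw [hsplit, hIic, hneg]
    _ = ∫ x in Ioi (0:ℝ), (h x + h (-x)) ∂γ := (integral_add hint1 hint2).symm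
    _ = _ := by
        refine setIntegral_congr_fun measurableSet_Ioi fun x _ => ?_
        exact hkey x

lemma int_h_pos {σ : ℝ} (hσ : 0 < σ) (hσ1 : σ < 1) :
    0 < ∫ x, (stdNormalCDF (x / σ) ^ 2 - stdNormalCDF x ^ 2) ∂γ := by
  rw [int_h_eq hσ]
  set p : ℝ → ℝ := fun x =>
    2 * (stdNormalCDF (x / σ) - stdNormalCDF x) * (stdNormalCDF (x / σ) + stdNormalCDF x - 1)
    with hp
  have hpc : Continuous p := by
    apply Continuous.mul
    · exact (continuous_const.mul ((Phi_cont.comp (continuous_id.div_const σ)).sub Phi_cont))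
    · exact ((Phi_cont.comp (continuous_id.div_const σ)).add Phi_cont).sub continuous_const
  have hppos : ∀ x ∈ Ioi (0:ℝ), 0 < p x := by
    intro x hx
    rw [mem_Ioi] at hx
    have h1 : x < x / σ := by
      rw [lt_div_iff₀ hσ]
      nlinarith
    have h2 : stdNormalCDF x < stdNormalCDF (x / σ) := Phi_strictMono h1
    have h3 : 1 / 2 < stdNormalCDF x := Phi_half_lt hx
    have h4 : 1 / 2 < stdNormalCDF (x / σ) := Phi_half_lt (by positivity)
    rw [hp]
    nlinarith
  have hpi : IntegrableOn p (Ioi (0:ℝ)) γ := by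
    refine (integrable_gamma_of_bdd hpc.measurable 6 fun x => ?_).integrableOn
    have := Phi_nonneg (x / σ); have := Phi_le_one (x / σ)
    have := Phi_nonneg x; have := Phi_le_one x
    rw [abs_le]
    simp only [hp]
    constructor <;> nlinarith
  rw [setIntegral_pos_iff_support_of_nonneg_ae ?_ hpi]
  · refine lt_of_lt_of_le gamma_Ioi_pos (measure_mono fun x hx => ?_)
    exact ⟨ne_of_gt (hppos x hx), hx⟩
  · refine (ae_restrict_iff' measurableSet_Ioi).2 (Filter.Eventually.of_forall ?_)
    exact fun x hx => (hppos x hx).le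

lemma int_h_neg {σ : ℝ} (hσ1 : 1 < σ) :
    ∫ x, (stdNormalCDF (x / σ) ^ 2 - stdNormalCDF x ^ 2) ∂γ < 0 := by
  have hσ : 0 < σ := lt_trans one_pos hσ1
  rw [int_h_eq hσ]
  set p : ℝ → ℝ := fun x =>
    2 * (stdNormalCDF (x / σ) - stdNormalCDF x) * (stdNormalCDF (x / σ) + stdNormalCDF x - 1)
    with hp
  have hpc : Continuous p := by
    apply Continuous.mul
    · exact (continuous_const.mul ((Phi_cont.comp (continuous_id.div_const σ)).sub Phi_cont))
    · exact ((Phi_cont.comp (continuous_id.div_const σ)).add Phi_cont).sub continuous_const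
  have hppos : ∀ x ∈ Ioi (0:ℝ), 0 < -p x := by
    intro x hx
    rw [mem_Ioi] at hx
    have h1 : x / σ < x := by
      rw [div_lt_iff₀ hσ]
      nlinarith
    have h2 : stdNormalCDF (x / σ) < stdNormalCDF x := Phi_strictMono h1
    have h3 : 1 / 2 < stdNormalCDF x := Phi_half_lt hx
    have h4 : 1 / 2 < stdNormalCDF (x / σ) := Phi_half_lt (by positivity)
    rw [hp]
    simp only
    nlinarith
  have hpi : IntegrableOn (fun x => -p x) (Ioi (0:ℝ)) γ := by
    refine (integrable_gamma_of_bdd (hpc.neg).measurable 6 fun x => ?_).integrableOn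
    have := Phi_nonneg (x / σ); have := Phi_le_one (x / σ)
    have := Phi_nonneg x; have := Phi_le_one x
    rw [abs_le]
    simp only [hp, Pi.neg_apply]
    constructor <;> nlinarith
  have key : 0 < ∫ x in Ioi (0:ℝ), -p x ∂γ := by
    rw [setIntegral_pos_iff_support_of_nonneg_ae ?_ hpi]
    · refine lt_of_lt_of_le gamma_Ioi_pos (measure_mono fun x hx => ?_)
      exact ⟨ne_of_gt (hppos x hx), hx⟩
    · refine (ae_restrict_iff' measurableSet_Ioi).2 (Filter.Eventually.of_forall ?_)
      exact fun x hx => (hppos x hx).le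
  rw [integral_neg] at key
  linarith

lemma var_eq {Ω : Type*} [MeasurableSpace Ω] (Q : Measure Ω) [IsProbabilityMeasure Q]
    (ε : Ω → ℝ) (hεmeas : Measurable ε) (hεlaw : Q.map ε = gaussianReal 0 1)
    {σ : ℝ} (hσ : 0 < σ) :
    variance (fun ω => stdNormalCDF (ε ω / σ)) Q
      = 1 / 12 + ∫ x, (stdNormalCDF (x / σ) ^ 2 - stdNormalCDF x ^ 2) ∂γ := by
  set g : ℝ → ℝ := fun x => stdNormalCDF (x / σ) with hg
  have hgc : Continuous g := Phi_cont.comp (continuous_id.div_const σ)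
  have hZm : AEStronglyMeasurable (fun ω => g (ε ω)) Q :=
    (hgc.measurable.comp hεmeas).aestronglyMeasurable
  have hbound : ∀ x, |g x| ≤ 1 := fun x =>
    abs_le.2 ⟨by linarith [Phi_nonneg (x / σ)], Phi_le_one _⟩
  have hZ2 : MemLp (fun ω => g (ε ω)) 2 Q :=
    MemLp.of_bound hZm 1 (Filter.Eventually.of_forall fun ω => hbound (ε ω))
  have hmap : ∀ (f : ℝ → ℝ), AEStronglyMeasurable f γ →
      ∫ ω, f (ε ω) ∂Q = ∫ x, f x ∂γ := by
    intro f hf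
    rw [γ, ← hεlaw, integral_map hεmeas.aemeasurable]
    rw [hεlaw]
    exact hf
  have h1 : ∫ ω, g (ε ω) ∂Q = 1 / 2 := by
    rw [hmap g hgc.aestronglyMeasurable]
    exact int_Phi_div hσ
  have hDint : Integrable (fun x => g x ^ 2 - stdNormalCDF x ^ 2) γ := by
    refine integrable_gamma_of_bdd ((hgc.pow 2).sub (Phi_cont.pow 2)).measurable 1 fun x => ?_
    have := Phi_nonneg (x / σ); have := Phi_le_one (x / σ)
    have := Phi_nonneg x; have := Phi_le_one x
    rw [abs_le]
    simp only [hg]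
    constructor <;> nlinarith
  have hPhi2int : Integrable (fun x => stdNormalCDF x ^ 2) γ := by
    refine integrable_gamma_of_bdd (Phi_cont.pow 2).measurable 1 fun x => ?_
    have := Phi_nonneg x; have := Phi_le_one x
    rw [abs_le]
    constructor <;> nlinarith
  have h2 : ∫ ω, g (ε ω) ^ 2 ∂Q
      = 1 / 3 + ∫ x, (g x ^ 2 - stdNormalCDF x ^ 2) ∂γ := by
    rw [hmap (fun x => g x ^ 2) (hgc.pow 2).aestronglyMeasurable]
    have hsum : ∫ x, g x ^ 2 ∂γ
        = (∫ x, (g x ^ 2 - stdNormalCDF x ^ 2) ∂γ) + ∫ x, stdNormalCDF x ^ 2 ∂γ := by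
      rw [← integral_add hDint hPhi2int]
      congr 1
      funext x
      ring
    rw [hsum, int_Phi_sq]
    ring
  rw [variance_eq_sub hZ2]
  simp only [Pi.pow_apply]
  rw [h1, h2]
  ring

end StdAux


/-- **Example 4 of Gneiting–Ranjan.** For standard normal `ε` and
`Z_σ = Φ(ε/σ)`: the forecast is underdispersed (`Var(Z_σ) > 1/12`) if `σ < 1`,
neutrally dispersed (`Var(Z_σ) = 1/12`) if `σ = 1`, and overdispersed
(`Var(Z_σ) < 1/12`) if `σ > 1`. -/
theorem gaussian_pit_dispersion
    {Ω : Type*} [MeasurableSpace Ω] (Q : Measure Ω) [IsProbabilityMeasure Q]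
    (ε : Ω → ℝ) (hεmeas : Measurable ε) (hεlaw : Q.map ε = gaussianReal 0 1)
    (σ : ℝ) (hσ : 0 < σ) :
    (σ < 1 → 1 / 12 < variance (fun ω => stdNormalCDF (ε ω / σ)) Q) ∧
      (σ = 1 → variance (fun ω => stdNormalCDF (ε ω / σ)) Q = 1 / 12) ∧
      (1 < σ → variance (fun ω => stdNormalCDF (ε ω / σ)) Q < 1 / 12) := by
  rw [StdAux.var_eq Q ε hεmeas hεlaw hσ]
  refine ⟨fun h => ?_, fun h => ?_, fun h => ?_⟩
  · linarith [StdAux.int_h_pos hσ h]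
  · subst h
    simp
  · linarith [StdAux.int_h_neg h]
end

section
/- Let ε be a standard normal random variable, let σ > 0, and let Z_σ = Φ(ε/σ), where Φ is the standard normal cumulative distribution function with inverse Φ⁻¹. Then Var(Z_σ) = 2∫₀¹ z·(1 − Φ(σ·Φ⁻¹(z))) dz − (∫₀¹ (1 − Φ(σ·Φ⁻¹(z))) dz)². -/
open MeasureTheory ProbabilityTheory

/-- The inverse `Φ⁻¹` of the standard normal cumulative distribution function. -/
noncomputable def stdNormalCDFInv : ℝ → ℝ :=
  Function.invFun stdNormalCDF

section Aux
open Set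

lemma stdNormalCDF_eq_integral (x : ℝ) :
    stdNormalCDF x = ∫ t in Set.Iic x, gaussianPDFReal 0 1 t := by
  rw [stdNormalCDF, gaussianReal_apply_eq_integral 0 one_ne_zero,
    ENNReal.toReal_ofReal (setIntegral_nonneg measurableSet_Iic
      fun t _ => gaussianPDFReal_nonneg 0 1 t)]

lemma stdNormalCDF_strictMono : StrictMono stdNormalCDF := by
  intro x y hxy
  have hi := integrable_gaussianPDFReal 0 1
  have key : stdNormalCDF y - stdNormalCDF x = ∫ t in x..y, gaussianPDFReal 0 1 t := by
    rw [stdNormalCDF_eq_integral, stdNormalCDF_eq_integral,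
      intervalIntegral.integral_Iic_sub_Iic hi.integrableOn hi.integrableOn]
  have hpos : 0 < ∫ t in x..y, gaussianPDFReal 0 1 t :=
    intervalIntegral.intervalIntegral_pos_of_pos hi.intervalIntegrable
      (fun t => gaussianPDFReal_pos 0 1 t one_ne_zero) hxy
  linarith [key ▸ hpos]

lemma stdNormalCDF_continuous : Continuous stdNormalCDF := by
  have hi := integrable_gaussianPDFReal 0 1
  have : stdNormalCDF = fun x => (∫ t in (0:ℝ)..x, gaussianPDFReal 0 1 t) + stdNormalCDF 0 := by
    funext x
    rw [stdNormalCDF_eq_integral, stdNormalCDF_eq_integral,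
      ← intervalIntegral.integral_Iic_sub_Iic hi.integrableOn hi.integrableOn]
    ring
  rw [this]
  exact (hi.continuous_primitive 0).add continuous_const

lemma stdNormalCDF_nonneg (x : ℝ) : 0 ≤ stdNormalCDF x := ENNReal.toReal_nonneg

lemma stdNormalCDF_le_one (x : ℝ) : stdNormalCDF x ≤ 1 := by
  rw [stdNormalCDF]
  have h1 : gaussianReal 0 1 (Set.Iic x) ≤ 1 := prob_le_one
  exact ENNReal.toReal_le_of_le_ofReal zero_le_one (by simpa using h1)

lemma stdNormalCDF_pos (x : ℝ) : 0 < stdNormalCDF x :=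
  lt_of_le_of_lt (stdNormalCDF_nonneg (x - 1)) (stdNormalCDF_strictMono (by linarith))

lemma stdNormalCDF_lt_one (x : ℝ) : stdNormalCDF x < 1 :=
  lt_of_lt_of_le (stdNormalCDF_strictMono (show x < x + 1 by linarith)) (stdNormalCDF_le_one _)

lemma stdNormalCDF_tendsto_atTop : Filter.Tendsto stdNormalCDF Filter.atTop (nhds 1) := by
  have h := tendsto_measure_Iic_atTop (gaussianReal 0 1)
  rw [measure_univ] at h
  have := (ENNReal.tendsto_toReal (by norm_num : (1:ENNReal) ≠ ⊤)).comp h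
  exact this

lemma gaussianPDFReal_even (t : ℝ) : gaussianPDFReal 0 1 (-t) = gaussianPDFReal 0 1 t := by
  simp [gaussianPDFReal, neg_sq]

lemma stdNormalCDF_neg (x : ℝ) : stdNormalCDF (-x) = 1 - stdNormalCDF x := by
  have hi := integrable_gaussianPDFReal 0 1
  have h1 : stdNormalCDF (-x) = ∫ t in Set.Ioi x, gaussianPDFReal 0 1 t := by
    rw [stdNormalCDF_eq_integral]
    calc ∫ t in Set.Iic (-x), gaussianPDFReal 0 1 t
        = ∫ t in Set.Iic (-x), gaussianPDFReal 0 1 (-t) :=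
          setIntegral_congr_fun measurableSet_Iic fun t _ => (gaussianPDFReal_even t).symm
      _ = ∫ t in Set.Ioi (-(-x)), gaussianPDFReal 0 1 t := integral_comp_neg_Iic _ _
      _ = ∫ t in Set.Ioi x, gaussianPDFReal 0 1 t := by rw [neg_neg]
  have h2 : stdNormalCDF x + ∫ t in Set.Ioi x, gaussianPDFReal 0 1 t = 1 := by
    rw [stdNormalCDF_eq_integral,
      show Set.Ioi x = (Set.Iic x)ᶜ from (Set.compl_Iic).symm,
      integral_add_compl measurableSet_Iic hi]
    exact integral_gaussianPDFReal_eq_one 0 one_ne_zero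
  linarith

lemma stdNormalCDF_surjOn : ∀ y ∈ Set.Ioo (0:ℝ) 1, ∃ x, stdNormalCDF x = y := by
  intro y hy
  obtain ⟨b, hb⟩ : ∃ b, max y (1 - y) < stdNormalCDF b :=
    (stdNormalCDF_tendsto_atTop.eventually (eventually_gt_nhds
      (show max y (1-y) < 1 by simp; constructor <;> linarith [hy.1, hy.2]))).exists
  have hb1 : y < stdNormalCDF b := lt_of_le_of_lt (le_max_left _ _) hb
  have hb2 : stdNormalCDF (-b) < y := by
    rw [stdNormalCDF_neg]
    have := lt_of_le_of_lt (le_max_right y (1-y)) hb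
    linarith
  have hab : -b ≤ b := le_of_lt (stdNormalCDF_strictMono.lt_iff_lt.mp (hb2.trans hb1))
  obtain ⟨x, _, hx⟩ := intermediate_value_Icc hab stdNormalCDF_continuous.continuousOn
    (Set.mem_Icc.mpr ⟨le_of_lt hb2, le_of_lt hb1⟩)
  exact ⟨x, hx⟩

lemma stdNormalCDF_invFun_eq {y : ℝ} (hy : y ∈ Set.Ioo (0:ℝ) 1) :
    stdNormalCDF (stdNormalCDFInv y) = y :=
  Function.invFun_eq (stdNormalCDF_surjOn y hy)

lemma tail_measure_eq {Ω : Type*} [MeasurableSpace Ω] (Q : Measure Ω) [IsProbabilityMeasure Q]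
    (ε : Ω → ℝ) (hεmeas : Measurable ε) (hεlaw : Q.map ε = gaussianReal 0 1)
    {σ : ℝ} (hσ : 0 < σ) {t : ℝ} (ht : t ∈ Set.Ioo (0:ℝ) 1) :
    Q {ω | t < stdNormalCDF (ε ω / σ)} =
      ENNReal.ofReal (1 - stdNormalCDF (σ * stdNormalCDFInv t)) := by
  have hu : stdNormalCDF (stdNormalCDFInv t) = t := stdNormalCDF_invFun_eq ht
  have hset : {ω | t < stdNormalCDF (ε ω / σ)} = ε ⁻¹' (Set.Ioi (σ * stdNormalCDFInv t)) := by
    ext ω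
    simp only [Set.mem_setOf_eq, Set.mem_preimage, Set.mem_Ioi]
    rw [mul_comm, ← lt_div_iff₀ hσ]
    conv_lhs => rw [← hu]
    exact stdNormalCDF_strictMono.lt_iff_lt
  rw [hset, ← Measure.map_apply hεmeas measurableSet_Ioi, hεlaw,
    show Set.Ioi (σ * stdNormalCDFInv t) = (Set.Iic (σ * stdNormalCDFInv t))ᶜ from
      Set.compl_Iic.symm,
    measure_compl measurableSet_Iic (measure_ne_top _ _), measure_univ,
    show stdNormalCDF (σ * stdNormalCDFInv t)
        = (gaussianReal 0 1 (Set.Iic (σ * stdNormalCDFInv t))).toReal from rfl,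
    ENNReal.ofReal_sub _ ENNReal.toReal_nonneg, ENNReal.ofReal_one,
    ENNReal.ofReal_toReal (measure_ne_top _ _)]

end Aux

open Set in
/-- **equation (4) of Gneiting–Ranjan.** For standard normal `ε`, `σ > 0`
and `Z_σ = Φ(ε/σ)`,
`Var(Z_σ) = 2∫₀¹ z(1 − Φ(σΦ⁻¹(z))) dz − (∫₀¹ (1 − Φ(σΦ⁻¹(z))) dz)²`. -/
theorem gaussian_pit_variance_formula
    {Ω : Type*} [MeasurableSpace Ω] (Q : Measure Ω) [IsProbabilityMeasure Q]
    (ε : Ω → ℝ) (hεmeas : Measurable ε) (hεlaw : Q.map ε = gaussianReal 0 1)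
    (σ : ℝ) (hσ : 0 < σ) :
    variance (fun ω => stdNormalCDF (ε ω / σ)) Q =
      2 * (∫ z in Set.Ioo (0 : ℝ) 1, z * (1 - stdNormalCDF (σ * stdNormalCDFInv z))) -
        (∫ z in Set.Ioo (0 : ℝ) 1, (1 - stdNormalCDF (σ * stdNormalCDFInv z))) ^ 2 := by
  set Z : Ω → ℝ := fun ω => stdNormalCDF (ε ω / σ) with hZdef
  have hZmeas : Measurable Z := stdNormalCDF_continuous.measurable.comp (hεmeas.div_const σ)
  have hZnn : ∀ ω, 0 ≤ Z ω := fun ω => (stdNormalCDF_pos _).le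
  have hZlt : ∀ ω, Z ω < 1 := fun ω => stdNormalCDF_lt_one _
  have hmem : MemLp Z 2 Q :=
    memLp_of_bounded (Filter.Eventually.of_forall fun ω =>
      Set.mem_Icc.mpr ⟨hZnn ω, (hZlt ω).le⟩) hZmeas.aestronglyMeasurable 2
  have hZint : Integrable Z Q := hmem.integrable one_le_two
  have hZsqint : Integrable (fun ω => Z ω ^ 2) Q := hmem.integrable_sq
  set T' : ℝ → ℝ := fun t => (Q {ω | t < Z ω}).toReal with hT'def
  have hT'anti : Antitone T' := fun s t hst =>
    ENNReal.toReal_mono (measure_ne_top _ _)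
      (measure_mono fun ω hω => lt_of_le_of_lt hst hω)
  have hT'meas : Measurable T' := hT'anti.measurable
  have hT'nn : ∀ t, 0 ≤ T' t := fun t => ENNReal.toReal_nonneg
  have hT'le : ∀ t, T' t ≤ 1 := fun t =>
    ENNReal.toReal_le_of_le_ofReal zero_le_one (by simpa using prob_le_one (μ := Q))
  have hT'zero : ∀ t ∈ Set.Ici (1:ℝ), T' t = 0 := by
    intro t ht
    have : {ω | t < Z ω} = ∅ :=
      Set.eq_empty_iff_forall_notMem.mpr fun ω hω =>
        absurd hω (not_lt.mpr ((hZlt ω).le.trans ht))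
    simp [hT'def, this]
  have htail : ∀ t ∈ Set.Ioo (0:ℝ) 1,
      T' t = 1 - stdNormalCDF (σ * stdNormalCDFInv t) := by
    intro t ht
    rw [hT'def]
    simp only
    rw [show {ω | t < Z ω} = {ω | t < stdNormalCDF (ε ω / σ)} from rfl,
      tail_measure_eq Q ε hεmeas hεlaw hσ ht,
      ENNReal.toReal_ofReal (by linarith [stdNormalCDF_le_one (σ * stdNormalCDFInv t)])]
  have hdisj : Disjoint (Set.Ioo (0:ℝ) 1) (Set.Ici 1) :=
    Set.disjoint_left.mpr fun t ht h1 => absurd h1 (not_le.mpr ht.2)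
  have hT'intOn : IntegrableOn T' (Set.Ioo (0:ℝ) 1) volume := by
    apply Measure.integrableOn_of_bounded (M := 1)
    · simp
    · exact hT'meas.aestronglyMeasurable
    · exact Filter.Eventually.of_forall fun t => by
        rw [Real.norm_eq_abs, abs_of_nonneg (hT'nn t)]; exact hT'le t
  -- first moment
  have hEZ : ∫ ω, Z ω ∂Q = ∫ t in Set.Ioo (0:ℝ) 1, T' t := by
    rw [hZint.integral_eq_integral_meas_lt (Filter.Eventually.of_forall hZnn),
      ← Set.Ioo_union_Ici_eq_Ioi zero_lt_one]
    show ∫ t in Set.Ioo (0:ℝ) 1 ∪ Set.Ici 1, T' t = _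
    rw [setIntegral_union hdisj measurableSet_Ici hT'intOn
        ((integrableOn_congr_fun hT'zero measurableSet_Ici).mpr (integrableOn_zero)),
      setIntegral_congr_fun measurableSet_Ici hT'zero]
    simp
  -- second moment
  have hEZsq : ∫ ω, Z ω ^ 2 ∂Q = ∫ t in Set.Ioo (0:ℝ) 1, T' t * (2 * t) := by
    have hg : ∀ t > (0:ℝ), IntervalIntegrable (fun s => 2 * s) volume 0 t := fun t _ =>
      ((continuous_const.mul continuous_id).intervalIntegrable 0 t)
    have layer := lintegral_comp_eq_lintegral_meas_lt_mul Q (f := Z) (g := fun s => 2 * s)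
      (Filter.Eventually.of_forall hZnn) hZmeas.aemeasurable hg
      (by filter_upwards [self_mem_ae_restrict measurableSet_Ioi] with t ht
          exact by simp only [Set.mem_Ioi] at ht; linarith)
    have hsq : ∀ ω, (∫ t in (0:ℝ)..Z ω, 2 * t) = Z ω ^ 2 := fun ω => by
      rw [intervalIntegral.integral_const_mul, integral_id]; ring
    simp_rw [hsq] at layer
    rw [← ofReal_integral_eq_lintegral_ofReal hZsqint
      (Filter.Eventually.of_forall fun ω => sq_nonneg _)] at layer
    have hintOn : IntegrableOn (fun t => T' t * (2 * t)) (Set.Ioo (0:ℝ) 1) volume := by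
      apply Measure.integrableOn_of_bounded (M := 2)
      · simp
      · exact (hT'meas.mul (measurable_const.mul measurable_id)).aestronglyMeasurable
      · filter_upwards [self_mem_ae_restrict measurableSet_Ioo] with t ht
        rw [Real.norm_eq_abs, abs_of_nonneg (by nlinarith [hT'nn t, ht.1.le])]
        nlinarith [hT'le t, hT'nn t, ht.1.le, ht.2.le]
    have hsplit : ∫⁻ t in Set.Ioi (0:ℝ), Q {a | t < Z a} * ENNReal.ofReal (2 * t) =
        ENNReal.ofReal (∫ t in Set.Ioo (0:ℝ) 1, T' t * (2 * t)) := by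
      rw [← Set.Ioo_union_Ici_eq_Ioi zero_lt_one, lintegral_union measurableSet_Ici hdisj]
      have hIci : ∫⁻ t in Set.Ici (1:ℝ), Q {a | t < Z a} * ENNReal.ofReal (2 * t) = 0 := by
        rw [setLIntegral_congr_fun measurableSet_Ici
          (fun t ht => ?_), lintegral_zero]
        have : {a | t < Z a} = ∅ :=
          Set.eq_empty_iff_forall_notMem.mpr fun ω hω =>
            absurd hω (not_lt.mpr ((hZlt ω).le.trans ht))
        simp [this]
      rw [hIci, add_zero,
        ofReal_integral_eq_lintegral_ofReal hintOn
          (by filter_upwards [self_mem_ae_restrict measurableSet_Ioo] with t ht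
              exact mul_nonneg (hT'nn t) (by linarith [ht.1.le]))]
      apply setLIntegral_congr_fun measurableSet_Ioo
      intro t ht
      simp only
      rw [ENNReal.ofReal_mul (hT'nn t), hT'def]
      simp only
      rw [ENNReal.ofReal_toReal (measure_ne_top _ _)]
    rw [hsplit] at layer
    exact (ENNReal.ofReal_eq_ofReal_iff (integral_nonneg fun ω => sq_nonneg _)
      (setIntegral_nonneg measurableSet_Ioo fun t ht =>
        mul_nonneg (hT'nn t) (by linarith [ht.1.le]))).mp layer
  -- assemble
  rw [variance_eq_sub hmem]
  have hpow : ∫ ω, (Z ^ 2) ω ∂Q = ∫ ω, Z ω ^ 2 ∂Q := by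
    apply integral_congr_ae; filter_upwards with ω; simp
  rw [hpow, hEZsq, hEZ]
  have h3 : ∫ t in Set.Ioo (0:ℝ) 1, T' t * (2 * t) =
      2 * ∫ z in Set.Ioo (0:ℝ) 1, z * (1 - stdNormalCDF (σ * stdNormalCDFInv z)) := by
    rw [← integral_const_mul]
    exact setIntegral_congr_fun measurableSet_Ioo fun t ht => by rw [htail t ht]; ring
  have h4 : ∫ t in Set.Ioo (0:ℝ) 1, T' t =
      ∫ z in Set.Ioo (0:ℝ) 1, (1 - stdNormalCDF (σ * stdNormalCDFInv z)) :=
    setIntegral_congr_fun measurableSet_Ioo htail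
  rw [h3, h4]
end
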